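/- arXiv:2112.14204 — 5 statements merged into one kernel-verified Lean document; each statement's English description precedes it below -/
import Mathlib

section
/- For any X ∈ ℝ^{nd×Kd}, the maximum of tr(XᵀV) over V ∈ F equals the maximum of ⟨H, μ(X)⟩ = Σ_{i,j} H_{ij}·μ(X)_{ij} over clustering matrices H ∈ 𝓗. Consequently, a maximizer of tr(XᵀV) over F is obtained by taking a maximizer H of ⟨H, μ(X)⟩ over 𝓗 and, for each i, setting the unique nonzero block of the i-th block row of V to be a maximizer of ⟨X_{ie_i}, Q⟩ over Q ∈ O(d), where e_i is the column with H_{ie_i} = 1. -/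
open Matrix BigOperators Finset

/-- Frobenius norm of a real matrix. -/
noncomputable def frobNorm {a b : Type*} [Fintype a] [Fintype b]
    (X : Matrix a b ℝ) : ℝ :=
  Real.sqrt (∑ i, ∑ j, X i j ^ 2)

/-- `Q` belongs to the real orthogonal group `O(d)`. -/
def IsOrthoMat {d : ℕ} (Q : Matrix (Fin d) (Fin d) ℝ) : Prop :=
  Q * Qᵀ = 1 ∧ Qᵀ * Q = 1

/-- `Q` belongs to the special orthogonal group `SO(d)`. -/
def IsSpecOrthoMat {d : ℕ} (Q : Matrix (Fin d) (Fin d) ℝ) : Prop :=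
  IsOrthoMat Q ∧ Q.det = 1

/-- The `(i,j)`-th `d × d` block of a block matrix. -/
def blockOf {n K d : ℕ} (X : Matrix (Fin n × Fin d) (Fin K × Fin d) ℝ)
    (i : Fin n) (j : Fin K) : Matrix (Fin d) (Fin d) ℝ :=
  fun a b => X (i, a) (j, b)

/-- The singular values of a real `d × d` matrix: square roots of the
eigenvalues of the Gram matrix `Xᴴ X`. -/
noncomputable def singVals {d : ℕ} (X : Matrix (Fin d) (Fin d) ℝ) : Fin d → ℝ :=
  fun k => Real.sqrt ((Matrix.isHermitian_conjTranspose_mul_self X).eigenvalues k)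

/-- Nuclear norm: the sum of the singular values. -/
noncomputable def nuclearNorm {d : ℕ} (X : Matrix (Fin d) (Fin d) ℝ) : ℝ :=
  ∑ k, singVals X k

/-- The map `μ` sending `X` to its `n × K` matrix of blockwise nuclear norms. -/
noncomputable def muMap {n K d : ℕ} (X : Matrix (Fin n × Fin d) (Fin K × Fin d) ℝ) :
    Matrix (Fin n) (Fin K) ℝ :=
  fun i j => nuclearNorm (blockOf X i j)

/-- `H` is a clustering matrix: 0/1 entries, each row sums to 1, each column sums to `m`. -/
def IsClusteringMatrix {n K : ℕ} (m : ℕ) (H : Matrix (Fin n) (Fin K) ℝ) : Prop :=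
  (∀ i j, H i j = 0 ∨ H i j = 1) ∧ (∀ i, ∑ j, H i j = 1) ∧ (∀ j, ∑ i, H i j = (m : ℝ))

/-- `V = (1_{1×K} ⊗ R) ⊙ (H ⊗ 1_{d×d})`: the `(i,j)`-th `d × d` block is `H i j • R i`. -/
def buildV {n K d : ℕ} (R : Fin n → Matrix (Fin d) (Fin d) ℝ)
    (H : Matrix (Fin n) (Fin K) ℝ) : Matrix (Fin n × Fin d) (Fin K × Fin d) ℝ :=
  fun p q => H p.1 q.1 * R p.1 p.2 q.2

/-- Membership in the set `F` (resp. `E` if `G = SO(d)`): `V` is built from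
blocks `R i ∈ G` and a clustering matrix `H`. -/
def InFeas {n K d : ℕ} (m : ℕ) (G : Matrix (Fin d) (Fin d) ℝ → Prop)
    (V : Matrix (Fin n × Fin d) (Fin K × Fin d) ℝ) : Prop :=
  ∃ (R : Fin n → Matrix (Fin d) (Fin d) ℝ) (H : Matrix (Fin n) (Fin K) ℝ),
    (∀ i, G (R i)) ∧ IsClusteringMatrix m H ∧ V = buildV R H

/-- Membership in `F`: blocks in `O(d)`. -/
def InF {n K d : ℕ} (m : ℕ) (V : Matrix (Fin n × Fin d) (Fin K × Fin d) ℝ) : Prop :=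
  InFeas m IsOrthoMat V

/-- Membership in `P_K(G)`: `M = bdiag(U₁,…,U_K) (P ⊗ I_d)` with `U_k ∈ G`
and `P` a permutation matrix, i.e. the `(a,b)` block of `M` is `U a` if `a = π b`, else `0`. -/
def InPK {K d : ℕ} (G : Matrix (Fin d) (Fin d) ℝ → Prop)
    (M : Matrix (Fin K × Fin d) (Fin K × Fin d) ℝ) : Prop :=
  ∃ (U : Fin K → Matrix (Fin d) (Fin d) ℝ) (π : Equiv.Perm (Fin K)),
    (∀ k, G (U k)) ∧ ∀ p q, M p q = if p.1 = π q.1 then U p.1 p.2 q.2 else 0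

/-- `dist_G(V₁,V₂) = min_{Q ∈ P_K(G)} ‖V₁ - V₂ Q‖_F` (the minimum is attained
since `P_K(G)` is compact; we express it as an infimum). -/
noncomputable def distG {n K d : ℕ} (G : Matrix (Fin d) (Fin d) ℝ → Prop)
    (V₁ V₂ : Matrix (Fin n × Fin d) (Fin K × Fin d) ℝ) : ℝ :=
  sInf {r | ∃ Q, InPK G Q ∧ r = frobNorm (V₁ - V₂ * Q)}

/-- Estimation error `ε_G(V)` with respect to a ground truth `Vstar`. -/
noncomputable def epsG {n K d : ℕ} (G : Matrix (Fin d) (Fin d) ℝ → Prop)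
    (Vstar V : Matrix (Fin n × Fin d) (Fin K × Fin d) ℝ) : ℝ :=
  distG G V Vstar


section AuxStmt5
variable {d : ℕ}

-- basic: the eigenvector matrix
noncomputable def eigV (A : Matrix (Fin d) (Fin d) ℝ) : Matrix (Fin d) (Fin d) ℝ :=
  fun i k => (Matrix.isHermitian_conjTranspose_mul_self A).eigenvectorBasis k i

lemma eigV_orth (A : Matrix (Fin d) (Fin d) ℝ) : (eigV A)ᵀ * eigV A = 1 := by
  ext j k
  have h := orthonormal_iff_ite.mp
    (Matrix.isHermitian_conjTranspose_mul_self A).eigenvectorBasis.orthonormal j k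
  simp only [PiLp.inner_apply, RCLike.inner_apply, starRingEnd_apply, star_trivial] at h
  simp [Matrix.mul_apply, eigV, Matrix.one_apply, ← h, mul_comm]

lemma eigV_diag (A : Matrix (Fin d) (Fin d) ℝ) :
    (A * eigV A)ᵀ * (A * eigV A)
      = Matrix.diagonal ((Matrix.isHermitian_conjTranspose_mul_self A).eigenvalues) := by
  have hB := Matrix.isHermitian_conjTranspose_mul_self A
  have key : ∀ k, (Aᵀ * A) *ᵥ (fun i => eigV A i k)
      = hB.eigenvalues k • (fun i => eigV A i k) := by
    intro k
    have := hB.mulVec_eigenvectorBasis k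
    simpa [eigV, ← Matrix.conjTranspose_eq_transpose_of_trivial] using this
  ext j k
  have h1 : ((A * eigV A)ᵀ * (A * eigV A)) j k
      = ((eigV A)ᵀ * ((Aᵀ * A) * eigV A)) j k := by
    simp [Matrix.transpose_mul, Matrix.mul_assoc]
  rw [h1]
  have h2 : ((Aᵀ * A) * eigV A) = eigV A * Matrix.diagonal hB.eigenvalues := by
    ext i k
    have hcol : ((Aᵀ * A) * eigV A) i k = ((Aᵀ * A) *ᵥ fun j => eigV A j k) i := by
      simp [Matrix.mul_apply, Matrix.mulVec, dotProduct]
    rw [Matrix.mul_diagonal, hcol, key k]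
    simp [mul_comm]
  rw [h2, ← Matrix.mul_assoc, eigV_orth, Matrix.one_mul]

lemma gram_comp {P V : Matrix (Fin d) (Fin d) ℝ} (hP : Pᵀ * P = 1) (hV : Vᵀ * V = 1) :
    (P * V)ᵀ * (P * V) = 1 := by
  rw [Matrix.transpose_mul]
  calc Vᵀ * Pᵀ * (P * V) = Vᵀ * (Pᵀ * P) * V := by rw [Matrix.mul_assoc, Matrix.mul_assoc,
        Matrix.mul_assoc]
    _ = 1 := by rw [hP, Matrix.mul_one, hV]

lemma trace_as_sum (A P : Matrix (Fin d) (Fin d) ℝ) :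
    (Aᵀ * P).trace = ∑ k, ∑ i, (A * eigV A) i k * (P * eigV A) i k := by
  set V := eigV A with hV
  have hVVt : V * Vᵀ = 1 := mul_eq_one_comm.mp (eigV_orth A)
  have h0 : Aᵀ * P * V * Vᵀ = Aᵀ * P := by
    rw [Matrix.mul_assoc (Aᵀ * P), hVVt, Matrix.mul_one]
  have h1 : (Aᵀ * P).trace = ((A * V)ᵀ * (P * V)).trace := by
    rw [Matrix.transpose_mul]
    calc (Aᵀ * P).trace = ((Aᵀ * P * V) * Vᵀ).trace := by rw [h0]
      _ = (Vᵀ * (Aᵀ * P * V)).trace := (Matrix.trace_mul_comm _ _)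
      _ = (Vᵀ * Aᵀ * (P * V)).trace := by rw [← Matrix.mul_assoc, ← Matrix.mul_assoc,
            Matrix.mul_assoc (Vᵀ * Aᵀ)]
  rw [h1]
  simp [Matrix.trace, Matrix.diag, Matrix.mul_apply, mul_comm]

theorem trace_le_nuclearNorm (A P : Matrix (Fin d) (Fin d) ℝ) (hP : IsOrthoMat P) :
    (Aᵀ * P).trace ≤ nuclearNorm A := by
  rw [trace_as_sum A P, nuclearNorm]
  apply Finset.sum_le_sum
  intro k _
  have hcs := Real.sum_mul_le_sqrt_mul_sqrt Finset.univ
    (fun i => (A * eigV A) i k) (fun i => (P * eigV A) i k)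
  have hA2 : ∑ i, (A * eigV A) i k ^ 2
      = (Matrix.isHermitian_conjTranspose_mul_self A).eigenvalues k := by
    have := congrFun (congrFun (eigV_diag A) k) k
    simpa [Matrix.mul_apply, Matrix.diagonal, sq, mul_comm] using this
  have hP2 : ∑ i, (P * eigV A) i k ^ 2 = 1 := by
    have h := gram_comp hP.2 (eigV_orth A)
    have := congrFun (congrFun h k) k
    simpa [Matrix.mul_apply, Matrix.one_apply, sq, mul_comm] using this
  rw [hA2, hP2, Real.sqrt_one, mul_one] at hcs
  exact hcs.trans_eq rfl

open RealInnerProductSpace in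
theorem exists_orthoMat_trace_eq (A : Matrix (Fin d) (Fin d) ℝ) :
    ∃ P, IsOrthoMat P ∧ (Aᵀ * P).trace = nuclearNorm A := by
  classical
  set lam := (Matrix.isHermitian_conjTranspose_mul_self A).eigenvalues with hlamdef
  have hlam : ∀ k, 0 ≤ lam k := Matrix.eigenvalues_conjTranspose_mul_self_nonneg A
  set V := eigV A with hVdef
  set w : Fin d → EuclideanSpace ℝ (Fin d) :=
    fun k => (WithLp.equiv 2 _).symm (fun i => (A * V) i k) with hwdef
  have hww : ∀ j k, ⟪w j, w k⟫ = Matrix.diagonal lam j k := by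
    intro j k
    have := congrFun (congrFun (eigV_diag A) j) k
    simp only [Matrix.mul_apply, Matrix.transpose_apply] at this
    simp only [PiLp.inner_apply, RCLike.inner_apply, starRingEnd_apply, star_trivial, hwdef,
      WithLp.equiv_symm_apply, PiLp.toLp_apply]
    rw [← this]
    exact Finset.sum_congr rfl fun i _ => by simp only [Matrix.mul_apply, hVdef]; ring
  set u : Fin d → EuclideanSpace ℝ (Fin d) := fun k => (Real.sqrt (lam k))⁻¹ • w k with hudef
  set s : Set (Fin d) := {k | lam k ≠ 0} with hsdef
  have hortho : Orthonormal ℝ (s.restrict u) := by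
    rw [orthonormal_iff_ite]
    rintro ⟨j, hj⟩ ⟨k, hk⟩
    have hinner : ⟪u j, u k⟫ = (Real.sqrt (lam j))⁻¹ * ((Real.sqrt (lam k))⁻¹
        * Matrix.diagonal lam j k) := by
      rw [hudef]
      simp only [real_inner_smul_left, real_inner_smul_right, hww]
      ring
    show ⟪u j, u k⟫ = _
    rw [hinner]
    by_cases hjk : j = k
    · subst hjk
      simp only [Matrix.diagonal_apply_eq, if_pos rfl, Subtype.mk_eq_mk]
      have hsj : Real.sqrt (lam j) ≠ 0 := by
        have : 0 < lam j := lt_of_le_of_ne (hlam j) (Ne.symm hj)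
        positivity
      rw [show (Real.sqrt (lam j))⁻¹ * ((Real.sqrt (lam j))⁻¹ * lam j)
          = (Real.sqrt (lam j) * Real.sqrt (lam j))⁻¹ * lam j by ring,
        Real.mul_self_sqrt (hlam j), inv_mul_cancel₀ hj]
      simp
    · rw [Matrix.diagonal_apply_ne _ hjk]
      simp [Subtype.mk_eq_mk, hjk]
  have hcard : Module.finrank ℝ (EuclideanSpace ℝ (Fin d)) = Fintype.card (Fin d) := by simp
  obtain ⟨c, hc⟩ := hortho.exists_orthonormalBasis_extension_of_card_eq hcard
  set U : Matrix (Fin d) (Fin d) ℝ := fun i k => c k i with hUdef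
  have hUtU : Uᵀ * U = 1 := by
    ext j k
    have h := orthonormal_iff_ite.mp c.orthonormal j k
    simp only [PiLp.inner_apply, RCLike.inner_apply, starRingEnd_apply, star_trivial] at h
    rw [Matrix.mul_apply]; simp only [Matrix.transpose_apply]
    simp [Matrix.mul_apply, hUdef, Matrix.one_apply, ← h, mul_comm]
  have hVtV : Vᵀ * V = 1 := eigV_orth A
  refine ⟨U * Vᵀ, ⟨?_, ?_⟩, ?_⟩
  · rw [Matrix.transpose_mul, Matrix.transpose_transpose]
    calc U * Vᵀ * (V * Uᵀ) = U * (Vᵀ * V) * Uᵀ := by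
          rw [Matrix.mul_assoc, Matrix.mul_assoc, Matrix.mul_assoc]
      _ = 1 := by rw [hVtV, Matrix.mul_one, mul_eq_one_comm.mp hUtU]
  · rw [Matrix.transpose_mul, Matrix.transpose_transpose]
    calc V * Uᵀ * (U * Vᵀ) = V * (Uᵀ * U) * Vᵀ := by
          rw [Matrix.mul_assoc, Matrix.mul_assoc, Matrix.mul_assoc]
      _ = 1 := by rw [hUtU, Matrix.mul_one, mul_eq_one_comm.mp hVtV]
  · have h1 : (Aᵀ * (U * Vᵀ)).trace = ((A * V)ᵀ * U).trace := by
      rw [Matrix.transpose_mul]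
      calc (Aᵀ * (U * Vᵀ)).trace = ((Aᵀ * U) * Vᵀ).trace := by rw [Matrix.mul_assoc]
        _ = (Vᵀ * (Aᵀ * U)).trace := (Matrix.trace_mul_comm _ _)
        _ = (Vᵀ * Aᵀ * U).trace := by rw [Matrix.mul_assoc]
    rw [h1]
    have h2 : ((A * V)ᵀ * U).trace = ∑ k, ⟪w k, c k⟫ := by
      simp only [Matrix.trace, Matrix.diag, Matrix.mul_apply, Matrix.transpose_apply]
      simp only [Matrix.trace, Matrix.diag, Matrix.mul_apply, Matrix.transpose_apply,
        PiLp.inner_apply, RCLike.inner_apply, starRingEnd_apply, star_trivial, hwdef,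
        WithLp.equiv_symm_apply, PiLp.toLp_apply, hUdef]
      exact Finset.sum_congr rfl fun _ _ => Finset.sum_congr rfl fun _ _ => mul_comm _ _
    rw [h2, nuclearNorm]
    apply Finset.sum_congr rfl
    intro k _
    by_cases hk : lam k = 0
    · have hw0 : w k = 0 := by
        rw [← inner_self_eq_zero (𝕜 := ℝ)]
        rw [hww k k, Matrix.diagonal_apply_eq, hk]
      rw [hw0]
      simp only [singVals]; rw [← hlamdef]; simp [hk]
    · have hck : c k = u k := hc k hk
      rw [hck, hudef]
      simp only [real_inner_smul_right, hww k k, Matrix.diagonal_apply_eq]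
      have hsk : Real.sqrt (lam k) ≠ 0 := by
        have : 0 < lam k := lt_of_le_of_ne (hlam k) (Ne.symm hk)
        positivity
      rw [show lam k = Real.sqrt (lam k) * Real.sqrt (lam k) from
        (Real.mul_self_sqrt (hlam k)).symm]
      simp only [singVals]; rw [← hlamdef, Real.sqrt_mul_self (Real.sqrt_nonneg _)]
      field_simp

end AuxStmt5

lemma trace_mul_buildV {n K d : ℕ} (X : Matrix (Fin n × Fin d) (Fin K × Fin d) ℝ)
    (R : Fin n → Matrix (Fin d) (Fin d) ℝ) (H' : Matrix (Fin n) (Fin K) ℝ) :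
    (Xᵀ * buildV R H').trace
      = ∑ i, ∑ j, H' i j * ((blockOf X i j)ᵀ * R i).trace := by
  simp only [Matrix.trace, Matrix.diag, Matrix.mul_apply, Matrix.transpose_apply,
    buildV, blockOf, Fintype.sum_prod_type]
  have hswap : ∀ (f : Fin K → Fin d → Fin n → Fin d → ℝ),
      ∑ j, ∑ b, ∑ i, ∑ a, f j b i a = ∑ i, ∑ j, ∑ b, ∑ a, f j b i a := by
    intro f
    exact (Finset.sum_congr rfl fun j _ => Finset.sum_comm).trans Finset.sum_comm
  rw [hswap]
  refine Finset.sum_congr rfl fun i _ => Finset.sum_congr rfl fun j _ => ?_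
  rw [Finset.mul_sum]
  refine Finset.sum_congr rfl fun b _ => ?_
  rw [Finset.mul_sum]
  exact Finset.sum_congr rfl fun a _ => by ring


/-- the maximum of `tr(Xᵀ V)` over `V ∈ F` equals the maximum of
`⟨H, μ(X)⟩` over clustering matrices `H ∈ 𝓗`; moreover, given a maximizer `H`
of `⟨·, μ(X)⟩` over `𝓗` (with `e i` the column where row `i` of `H` equals 1)
and, for each `i`, a maximizer `Q i` of `⟨X_{i e_i}, ·⟩` over `O(d)`, the matrix
`V ∈ F` built from `H` and the blocks `Q i` maximizes `tr(Xᵀ V)` over `F`. -/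
theorem stmt5 {n K d m : ℕ} (hm : 0 < m) (hn : n = K * m)
    (X : Matrix (Fin n × Fin d) (Fin K × Fin d) ℝ)
    (H : Matrix (Fin n) (Fin K) ℝ) (e : Fin n → Fin K)
    (Q : Fin n → Matrix (Fin d) (Fin d) ℝ)
    (hH : IsClusteringMatrix m H)
    (hHmax : ∀ H', IsClusteringMatrix m H' →
      ∑ i, ∑ j, H' i j * muMap X i j ≤ ∑ i, ∑ j, H i j * muMap X i j)
    (he : ∀ i, H i (e i) = 1)
    (hQ : ∀ i, IsOrthoMat (Q i))
    (hQmax : ∀ i, ∀ P, IsOrthoMat P →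
      ((blockOf X i (e i))ᵀ * P).trace ≤ ((blockOf X i (e i))ᵀ * Q i).trace) :
    sSup {t | ∃ V, InF m V ∧ t = (Xᵀ * V).trace}
      = sSup {t | ∃ H', IsClusteringMatrix m H' ∧ t = ∑ i, ∑ j, H' i j * muMap X i j} ∧
    InF m (buildV Q H) ∧
    (∀ W, InF m W → (Xᵀ * W).trace ≤ (Xᵀ * buildV Q H).trace) := by
  classical
  have hub : ∀ W : Matrix (Fin n × Fin d) (Fin K × Fin d) ℝ, InF m W → (Xᵀ * W).trace ≤ ∑ i, ∑ j, H i j * muMap X i j := by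
    rintro W ⟨R, H', hR, hH', rfl⟩
    rw [trace_mul_buildV]
    refine le_trans ?_ (hHmax H' hH')
    refine Finset.sum_le_sum fun i _ => Finset.sum_le_sum fun j _ => ?_
    have h0 : 0 ≤ H' i j := by rcases hH'.1 i j with h | h <;> simp [h]
    exact mul_le_mul_of_nonneg_left (trace_le_nuclearNorm _ _ (hR i)) h0
  have hzero : ∀ i j, j ≠ e i → H i j = 0 := by
    intro i j hj
    have hsum := hH.2.1 i
    rw [← Finset.add_sum_erase _ _ (Finset.mem_univ (e i)), he i] at hsum
    have h0 : ∑ j' ∈ Finset.univ.erase (e i), H i j' = 0 := by linarith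
    have hall := (Finset.sum_eq_zero_iff_of_nonneg (fun j' _ => by
      rcases hH.1 i j' with h | h <;> simp [h])).mp h0
    exact hall j (Finset.mem_erase.mpr ⟨hj, Finset.mem_univ j⟩)
  have hQval : ∀ i, ((blockOf X i (e i))ᵀ * Q i).trace = muMap X i (e i) := by
    intro i
    refine le_antisymm (trace_le_nuclearNorm _ _ (hQ i)) ?_
    obtain ⟨P, hP, hPeq⟩ := exists_orthoMat_trace_eq (blockOf X i (e i))
    calc muMap X i (e i) = ((blockOf X i (e i))ᵀ * P).trace := hPeq.symm
      _ ≤ _ := hQmax i P hP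
  have hval : (Xᵀ * buildV Q H).trace = ∑ i, ∑ j, H i j * muMap X i j := by
    rw [trace_mul_buildV]
    refine Finset.sum_congr rfl fun i _ => Finset.sum_congr rfl fun j _ => ?_
    by_cases hj : j = e i
    · subst hj; rw [hQval i]
    · rw [hzero i j hj]; ring
  have hInF : InF m (buildV Q H) := ⟨Q, H, hQ, hH, rfl⟩
  refine ⟨?_, hInF, fun W hW => (hub W hW).trans_eq hval.symm⟩
  have h1 : sSup {t | ∃ V, InF m V ∧ t = (Xᵀ * V).trace}
      = ∑ i, ∑ j, H i j * muMap X i j := by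
    apply IsGreatest.csSup_eq
    refine ⟨⟨buildV Q H, hInF, hval.symm⟩, ?_⟩
    rintro t ⟨V, hV, rfl⟩
    exact hub V hV
  have h2 : sSup {t | ∃ H', IsClusteringMatrix m H' ∧ t = ∑ i, ∑ j, H' i j * muMap X i j}
      = ∑ i, ∑ j, H i j * muMap X i j := by
    apply IsGreatest.csSup_eq
    refine ⟨⟨H, hH, rfl⟩, ?_⟩
    rintro t ⟨H', hH', rfl⟩
    exact hHmax H' hH'
  rw [h1, h2]
end

section
/- Let V* ∈ E with blocks R*_1,…,R*_n ∈ O(d) and clustering function C*, and let A ∈ ℝ^{nd×nd} be a symmetric block matrix whose (i,j)-th block equals w_{ij}·R*_i R*_jᵀ with w_{ij} = w_{ji} ∈ {0,1} and w_{ii} = 1 whenever C*(i) = C*(j) (blocks between different clusters are arbitrary, with A_{ji} = A_{ij}ᵀ). If A preserves V* by δ-separation for some δ > 0, then V* is a minimizer of ‖W − A·V*‖_F over W ∈ F, i.e., V* ∈ Π_F(A·V*). -/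
open Matrix BigOperators Finset

lemma conjT_real {d : ℕ} (X : Matrix (Fin d) (Fin d) ℝ) : Xᴴ = Xᵀ := by
  ext a b; simp [conjTranspose_apply]

lemma eigvals_congr {d : ℕ} {M N : Matrix (Fin d) (Fin d) ℝ} (h : M = N)
    (hM : M.IsHermitian) (hN : N.IsHermitian) : hM.eigenvalues = hN.eigenvalues := by
  subst h; rfl

lemma eig_smul_one {d : ℕ} (c : ℝ)
    (h : Matrix.IsHermitian (c • (1 : Matrix (Fin d) (Fin d) ℝ))) (k : Fin d) :
    h.eigenvalues k = c := by
  have hv := h.mulVec_eigenvectorBasis k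
  have hnz : (h.eigenvectorBasis k) ≠ 0 := h.eigenvectorBasis.orthonormal.ne_zero k
  rw [smul_mulVec, one_mulVec] at hv
  by_contra hne
  apply hnz
  have h2 : (h.eigenvalues k - c) • (⇑(h.eigenvectorBasis k) : Fin d → ℝ) = 0 := by
    rw [sub_smul, ← hv, sub_self]
  rcases smul_eq_zero.mp h2 with h3 | h3
  · exact absurd (by linarith [sub_eq_zero.mp (by exact h3)]) hne
  · ext a
    exact congrFun h3 a

lemma nuclear_smul_ortho {d : ℕ} (s : ℝ) (hs : 0 ≤ s) (R : Matrix (Fin d) (Fin d) ℝ)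
    (hR : Rᵀ * R = 1) : nuclearNorm (s • R) = s * d := by
  have hEq : (s • R)ᴴ * (s • R) = (s ^ 2) • (1 : Matrix (Fin d) (Fin d) ℝ) := by
    rw [conjT_real, transpose_smul, smul_mul_smul_comm, hR, sq]
  have h1 : ((s ^ 2) • (1 : Matrix (Fin d) (Fin d) ℝ)).IsHermitian := by
    rw [← hEq]; exact Matrix.isHermitian_conjTranspose_mul_self _
  have hev := eigvals_congr hEq (Matrix.isHermitian_conjTranspose_mul_self (s • R)) h1
  unfold nuclearNorm singVals
  rw [hev]
  have : ∀ k : Fin d, Real.sqrt (h1.eigenvalues k) = s := by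
    intro k
    rw [eig_smul_one (s ^ 2) h1 k, Real.sqrt_sq hs]
  simp [this, mul_comm]

lemma trace_le_nuclear {d : ℕ} (Q X : Matrix (Fin d) (Fin d) ℝ) (hQ : Qᵀ * Q = 1) :
    ∑ a, ∑ b, Q a b * X a b ≤ nuclearNorm X := by
  set h := Matrix.isHermitian_conjTranspose_mul_self X with hh
  set U : Matrix (Fin d) (Fin d) ℝ := (h.eigenvectorUnitary : Matrix (Fin d) (Fin d) ℝ) with hU
  have hUmem := h.eigenvectorUnitary.2
  have hUU : Uᵀ * U = 1 := by
    have h2 := (Matrix.mem_unitaryGroup_iff').mp hUmem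
    rw [Matrix.star_eq_conjTranspose] at h2
    rw [← conjT_real U]
    exact h2
  have hUUt : U * Uᵀ = 1 := by
    have h2 := (Matrix.mem_unitaryGroup_iff).mp hUmem
    rw [Matrix.star_eq_conjTranspose] at h2
    rw [← conjT_real U]
    exact h2
  have hdiag : Uᵀ * (Xᵀ * X) * U = Matrix.diagonal h.eigenvalues := by
    have h2 : star (h.eigenvectorUnitary : Matrix (Fin d) (Fin d) ℝ) * (Xᴴ * X)
        * (h.eigenvectorUnitary : Matrix (Fin d) (Fin d) ℝ)
        = Matrix.diagonal ((RCLike.ofReal : ℝ → ℝ) ∘ h.eigenvalues) := by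
      have h5 := h.conjStarAlgAut_star_eigenvectorUnitary
      rw [Unitary.conjStarAlgAut_apply, Unitary.coe_star, star_star] at h5
      exact h5
    rw [Matrix.star_eq_conjTranspose] at h2
    have h3 : Matrix.diagonal ((RCLike.ofReal : ℝ → ℝ) ∘ h.eigenvalues)
        = Matrix.diagonal h.eigenvalues := by
      congr 1
    rw [← h3, ← conjT_real U, ← conjT_real X]
    exact h2
  have hXU : ∀ k, ∑ a, ((X * U) a k) ^ 2 = h.eigenvalues k := by
    intro k
    have h2 : ((X * U)ᵀ * (X * U)) k k = Matrix.diagonal h.eigenvalues k k := by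
      rw [transpose_mul, mul_assoc Uᵀ Xᵀ (X * U), ← mul_assoc Xᵀ X U, ← mul_assoc, hdiag]
    simpa [Matrix.mul_apply, Matrix.transpose_apply, sq, mul_comm] using h2
  have hQU : ∀ k, ∑ a, ((Q * U) a k) ^ 2 = 1 := by
    intro k
    have h2 : ((Q * U)ᵀ * (Q * U)) k k = (1 : Matrix (Fin d) (Fin d) ℝ) k k := by
      rw [transpose_mul, mul_assoc Uᵀ Qᵀ (Q * U), ← mul_assoc Qᵀ Q U, ← mul_assoc, hQ, mul_one, hUU]
    simpa [Matrix.mul_apply, Matrix.transpose_apply, sq, mul_comm] using h2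
  have key2 : ∑ k, ∑ a, (Q * U) a k * (X * U) a k = ∑ a, ∑ b, Q a b * X a b := by
    simp only [Matrix.mul_apply, Finset.sum_mul_sum]
    rw [Finset.sum_comm]
    refine Finset.sum_congr rfl fun a _ => ?_
    rw [Finset.sum_comm]
    refine Finset.sum_congr rfl fun b _ => ?_
    rw [Finset.sum_comm]
    have h4 : ∀ c, ∑ k, Q a b * U b k * (X a c * U c k)
        = Q a b * X a c * ((U * Uᵀ) b c) := by
      intro c
      rw [Matrix.mul_apply, Finset.mul_sum]
      exact Finset.sum_congr rfl fun k _ => by simp [Matrix.transpose_apply]; ring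
    simp only [h4, hUUt, Matrix.one_apply, mul_ite, mul_one, mul_zero]
    simp
  rw [← key2]
  unfold nuclearNorm singVals
  refine Finset.sum_le_sum fun k _ => ?_
  calc ∑ a, (Q * U) a k * (X * U) a k
      ≤ Real.sqrt (∑ a, ((Q * U) a k) ^ 2) * Real.sqrt (∑ a, ((X * U) a k) ^ 2) :=
        Real.sum_mul_le_sqrt_mul_sqrt _ _ _
    _ = Real.sqrt (h.eigenvalues k) := by rw [hQU, hXU, Real.sqrt_one, one_mul]

/-- if `A` has blocks `A_{ij} = w_{ij} R*_i (R*_j)ᵀ` within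
clusters (`w` symmetric 0/1-valued with `w_{ii} = 1`), `A` is blockwise
symmetric, and `A` preserves `V*` by `δ`-separation for some `δ > 0`, then
`V* ∈ Π_F(A V*)`, i.e. `V*` minimizes `‖W - A V*‖_F` over `W ∈ F`. -/
theorem stmt7 {n K d m : ℕ} (G : Matrix (Fin d) (Fin d) ℝ → Prop)
    (hG : G = (IsOrthoMat (d := d)) ∨ G = (IsSpecOrthoMat (d := d)))
    (R : Fin n → Matrix (Fin d) (Fin d) ℝ) (hR : ∀ i, G (R i))
    (C : Fin n → Fin K)
    (hsize : ∀ j, (Finset.univ.filter fun i => C i = j).card = m)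
    (H : Matrix (Fin n) (Fin K) ℝ)
    (hH : ∀ i j, H i j = if C i = j then 1 else 0)
    (A : Matrix (Fin n × Fin d) (Fin n × Fin d) ℝ)
    (w : Fin n → Fin n → ℝ)
    (hw01 : ∀ i j, w i j = 0 ∨ w i j = 1) (hwsymm : ∀ i j, w i j = w j i)
    (hwdiag : ∀ i, w i i = 1)
    (hAsame : ∀ i j, C i = C j → blockOf A i j = w i j • (R i * (R j)ᵀ))
    (hAsymm : ∀ i j, blockOf A j i = (blockOf A i j)ᵀ)
    (δ : ℝ) (hδ : 0 < δ)
    (hsep : ∀ i j, j ≠ C i →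
      δ ≤ muMap (A * buildV R H) i (C i) - muMap (A * buildV R H) i j) :
    ∀ W, InF m W →
      frobNorm (buildV R H - A * buildV R H) ≤ frobNorm (W - A * buildV R H) := by
  intro W hW
  obtain ⟨R', H', hR'G, hH'c, rfl⟩ := hW
  set B := A * buildV R H with hB
  -- orthogonality of all blocks
  have hRo : ∀ i, IsOrthoMat (R i) := by
    intro i
    rcases hG with h | h
    · rw [h] at hR; exact hR i
    · rw [h] at hR; exact (hR i).1
  have hR'o : ∀ i, IsOrthoMat (R' i) := fun i => hR'G i
  -- sum of squares of an orthogonal matrix = d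
  have sum_sq_ortho : ∀ (Q : Matrix (Fin d) (Fin d) ℝ), Q * Qᵀ = 1 →
      ∑ a, ∑ b, (Q a b) ^ 2 = (d : ℝ) := by
    intro Q hQ
    have h1 : ∀ a, ∑ b, (Q a b) ^ 2 = (Q * Qᵀ) a a := by
      intro a; simp [Matrix.mul_apply, Matrix.transpose_apply, sq]
    simp only [h1, hQ]
    simp [Matrix.one_apply]
  -- block structure of B
  have hblock : ∀ i j, blockOf B i j = ∑ l, H l j • (blockOf A i l * R l) := by
    intro i j
    ext a b
    simp only [blockOf, hB, Matrix.mul_apply, Fintype.sum_prod_type, buildV,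
      Matrix.sum_apply, Matrix.smul_apply, smul_eq_mul]
    refine Finset.sum_congr rfl fun l _ => ?_
    rw [Finset.mul_sum]
    exact Finset.sum_congr rfl fun c _ => by ring
  -- the diagonal blocks
  set s : Fin n → ℝ := fun i => ∑ l ∈ Finset.univ.filter (fun l => C l = C i), w i l with hsdef
  have hs_nonneg : ∀ i, 0 ≤ s i := by
    intro i
    refine Finset.sum_nonneg fun l _ => ?_
    rcases hw01 i l with h | h <;> rw [h] <;> norm_num
  have hBC : ∀ i, blockOf B i (C i) = s i • R i := by
    intro i
    rw [hblock]
    rw [← Finset.sum_filter_add_sum_filter_not Finset.univ (fun l => C l = C i)]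
    have h2 : ∑ l ∈ Finset.univ.filter (fun l => ¬ C l = C i),
        H l (C i) • (blockOf A i l * R l) = 0 := by
      refine Finset.sum_eq_zero fun l hl => ?_
      rw [Finset.mem_filter] at hl
      rw [hH l (C i), if_neg hl.2, zero_smul]
    rw [h2, add_zero]
    have h3 : ∀ l ∈ Finset.univ.filter (fun l => C l = C i),
        H l (C i) • (blockOf A i l * R l) = w i l • R i := by
      intro l hl
      rw [Finset.mem_filter] at hl
      rw [hH l (C i), if_pos hl.2, one_smul, hAsame i l hl.2.symm, smul_mul_assoc,
        Matrix.mul_assoc, (hRo l).2, Matrix.mul_one]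
    rw [Finset.sum_congr rfl h3, ← Finset.sum_smul]
  -- nuclear norms of the diagonal blocks
  have hMC : ∀ i, muMap B i (C i) = s i * d := by
    intro i
    show nuclearNorm (blockOf B i (C i)) = s i * d
    rw [hBC i]
    exact nuclear_smul_ortho (s i) (hs_nonneg i) (R i) (hRo i).2
  -- generic inner product decomposition
  have hip : ∀ (R'' : Fin n → Matrix (Fin d) (Fin d) ℝ) (H'' : Matrix (Fin n) (Fin K) ℝ),
      ∑ p, ∑ q, buildV R'' H'' p q * B p q
        = ∑ i, ∑ j, H'' i j * (∑ a, ∑ b, R'' i a b * blockOf B i j a b) := by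
    intro R'' H''
    simp only [Fintype.sum_prod_type, buildV, blockOf]
    refine Finset.sum_congr rfl fun i _ => ?_
    rw [Finset.sum_comm]
    refine Finset.sum_congr rfl fun j _ => ?_
    rw [Finset.mul_sum]
    refine Finset.sum_congr rfl fun a _ => ?_
    rw [Finset.mul_sum]
    exact Finset.sum_congr rfl fun b _ => by ring
  -- separation: every entry of mu is at most the diagonal one
  have hmono : ∀ i j, muMap B i j ≤ muMap B i (C i) := by
    intro i j
    by_cases hj : j = C i
    · rw [hj]
    · have := hsep i j hj
      linarith
  -- inner product with W is bounded
  have hWle : ∑ p, ∑ q, buildV R' H' p q * B p q ≤ ∑ i, muMap B i (C i) := by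
    rw [hip]
    calc ∑ i, ∑ j, H' i j * (∑ a, ∑ b, R' i a b * blockOf B i j a b)
        ≤ ∑ i, ∑ j, H' i j * muMap B i (C i) := by
          refine Finset.sum_le_sum fun i _ => Finset.sum_le_sum fun j _ => ?_
          have h01 : 0 ≤ H' i j := by
            rcases hH'c.1 i j with h | h <;> rw [h] <;> norm_num
          refine mul_le_mul_of_nonneg_left ?_ h01
          calc ∑ a, ∑ b, R' i a b * blockOf B i j a b
              ≤ nuclearNorm (blockOf B i j) := trace_le_nuclear (R' i) _ (hR'o i).2
            _ = muMap B i j := rfl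
            _ ≤ muMap B i (C i) := hmono i j
      _ = ∑ i, muMap B i (C i) := by
          refine Finset.sum_congr rfl fun i _ => ?_
          rw [← Finset.sum_mul, hH'c.2.1 i, one_mul]
  -- inner product with V equals the bound
  have hVeq : ∑ p, ∑ q, buildV R H p q * B p q = ∑ i, muMap B i (C i) := by
    rw [hip]
    refine Finset.sum_congr rfl fun i _ => ?_
    rw [← Finset.sum_filter_add_sum_filter_not Finset.univ (fun j => C i = j)]
    have h2 : ∑ j ∈ Finset.univ.filter (fun j => ¬ C i = j),
        H i j * (∑ a, ∑ b, R i a b * blockOf B i j a b) = 0 := by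
      refine Finset.sum_eq_zero fun j hj => ?_
      rw [Finset.mem_filter] at hj
      rw [hH i j, if_neg hj.2, zero_mul]
    rw [h2, add_zero]
    have h3 : Finset.univ.filter (fun j => C i = j) = {C i} := by
      ext j; simp [eq_comm]
    rw [h3, Finset.sum_singleton, hH i (C i), if_pos rfl, one_mul, hBC i, hMC i]
    have h4 : ∀ a b, R i a b * (s i • R i) a b = s i * (R i a b) ^ 2 := by
      intro a b; simp [Matrix.smul_apply, sq]; ring
    simp only [h4, ← Finset.mul_sum]
    rw [sum_sq_ortho (R i) (hRo i).1]
  -- sums of squares are both n * d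
  have buildV_sumsq : ∀ (R'' : Fin n → Matrix (Fin d) (Fin d) ℝ)
      (H'' : Matrix (Fin n) (Fin K) ℝ),
      (∀ i, R'' i * (R'' i)ᵀ = 1) → (∀ i j, H'' i j = 0 ∨ H'' i j = 1) →
      (∀ i, ∑ j, H'' i j = 1) →
      ∑ p, ∑ q, (buildV R'' H'' p q) ^ 2 = (n : ℝ) * d := by
    intro R'' H'' ho h01 hrow
    simp only [Fintype.sum_prod_type, buildV]
    have h1 : ∀ i, ∑ a, ∑ j, ∑ b, (H'' i j * R'' i a b) ^ 2 = (d : ℝ) := by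
      intro i
      rw [Finset.sum_comm]
      calc ∑ j, ∑ a, ∑ b, (H'' i j * R'' i a b) ^ 2
          = ∑ j, H'' i j * (∑ a, ∑ b, (R'' i a b) ^ 2) := by
            refine Finset.sum_congr rfl fun j _ => ?_
            rw [Finset.mul_sum]
            refine Finset.sum_congr rfl fun a _ => ?_
            rw [Finset.mul_sum]
            refine Finset.sum_congr rfl fun b _ => ?_
            have : (H'' i j) ^ 2 = H'' i j := by
              rcases h01 i j with h | h <;> rw [h] <;> norm_num
            rw [mul_pow, this]
        _ = (d : ℝ) := by
            rw [← Finset.sum_mul, hrow i, one_mul, sum_sq_ortho (R'' i) (ho i)]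
    simp only [h1]
    simp [Finset.sum_const, Finset.card_univ, mul_comm]
  have hWsq : ∑ p, ∑ q, (buildV R' H' p q) ^ 2 = (n : ℝ) * d :=
    buildV_sumsq R' H' (fun i => (hR'o i).1) hH'c.1 hH'c.2.1
  have hVsq : ∑ p, ∑ q, (buildV R H p q) ^ 2 = (n : ℝ) * d := by
    refine buildV_sumsq R H (fun i => (hRo i).1) (fun i j => ?_) (fun i => ?_)
    · rw [hH i j]; split <;> simp
    · simp [hH i]
  -- expansion of the squared Frobenius norm
  have expand : ∀ (X : Matrix (Fin n × Fin d) (Fin K × Fin d) ℝ),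
      ∑ p, ∑ q, ((X - B) p q) ^ 2
        = (∑ p, ∑ q, (X p q) ^ 2) - 2 * (∑ p, ∑ q, X p q * B p q)
          + ∑ p, ∑ q, (B p q) ^ 2 := by
    intro X
    simp only [Matrix.sub_apply, sub_sq, mul_assoc, Finset.sum_add_distrib,
      Finset.sum_sub_distrib, ← Finset.mul_sum]
  unfold frobNorm
  apply Real.sqrt_le_sqrt
  rw [expand, expand, hWsq, hVsq, hVeq]
  linarith [hWle]
end

section
/- Let X = η·R where η > 0 and R ∈ O(d). Then for any X' ∈ ℝ^{d×d} and any P' minimizing ‖X' − Q‖_F over Q ∈ O(d), one has ‖R − P'‖_F ≤ (2/η)·‖X − X'‖_F. (Note that R itself is the unique minimizer of ‖X − Q‖_F over Q ∈ O(d).) -/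
open Matrix BigOperators Finset

section Aux

lemma frob_eq_norm {d : ℕ} (X : Matrix (Fin d) (Fin d) ℝ) :
    frobNorm X = ‖(WithLp.equiv 2 (Fin d × Fin d → ℝ)).symm (fun p => X p.1 p.2)‖ := by
  rw [EuclideanSpace.norm_eq, frobNorm]
  congr 1
  rw [Fintype.sum_prod_type]
  simp [sq_abs]

lemma frob_triangle {d : ℕ} (A B C : Matrix (Fin d) (Fin d) ℝ) :
    frobNorm (A - B) ≤ frobNorm (A - C) + frobNorm (C - B) := by
  rw [frob_eq_norm, frob_eq_norm, frob_eq_norm]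
  have h : ((WithLp.equiv 2 (Fin d × Fin d → ℝ)).symm (fun p => (A - B) p.1 p.2))
      = ((WithLp.equiv 2 (Fin d × Fin d → ℝ)).symm (fun p => (A - C) p.1 p.2))
        + ((WithLp.equiv 2 (Fin d × Fin d → ℝ)).symm (fun p => (C - B) p.1 p.2)) := by
    ext p
    simp [Matrix.sub_apply]
  rw [h]
  exact norm_add_le _ _

lemma frob_sq {d : ℕ} (X : Matrix (Fin d) (Fin d) ℝ) :
    frobNorm X ^ 2 = ∑ i, ∑ j, X i j ^ 2 := by
  rw [frobNorm]
  exact Real.sq_sqrt (by positivity)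

lemma frob_nonneg {d : ℕ} (X : Matrix (Fin d) (Fin d) ℝ) : 0 ≤ frobNorm X :=
  Real.sqrt_nonneg _

lemma frob_neg_sub {d : ℕ} (A B : Matrix (Fin d) (Fin d) ℝ) :
    frobNorm (A - B) = frobNorm (B - A) := by
  unfold frobNorm
  congr 1
  refine Finset.sum_congr rfl fun i _ => Finset.sum_congr rfl fun j _ => ?_
  simp [Matrix.sub_apply]
  ring

lemma frob_smul {d : ℕ} (c : ℝ) (hc : 0 ≤ c) (A : Matrix (Fin d) (Fin d) ℝ) :
    frobNorm (c • A) = c * frobNorm A := by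
  unfold frobNorm
  have h : (∑ i, ∑ j, (c • A) i j ^ 2) = c ^ 2 * ∑ i, ∑ j, A i j ^ 2 := by
    simp [Finset.mul_sum, Matrix.smul_apply, mul_pow]
  rw [h, Real.sqrt_mul (by positivity), Real.sqrt_sq hc]

lemma expand_sq {d : ℕ} (A B : Matrix (Fin d) (Fin d) ℝ) :
    (∑ i, ∑ j, (A - B) i j ^ 2)
      = (∑ i, ∑ j, A i j ^ 2) - 2 * (∑ i, ∑ j, A i j * B i j) + (∑ i, ∑ j, B i j ^ 2) := by
  rw [Finset.mul_sum, ← Finset.sum_sub_distrib, ← Finset.sum_add_distrib]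
  refine Finset.sum_congr rfl fun i _ => ?_
  rw [Finset.mul_sum, ← Finset.sum_sub_distrib, ← Finset.sum_add_distrib]
  refine Finset.sum_congr rfl fun j _ => ?_
  simp [Matrix.sub_apply]
  ring

lemma orth_sum_sq {d : ℕ} (Q : Matrix (Fin d) (Fin d) ℝ) (hQ : IsOrthoMat Q) :
    (∑ i, ∑ j, Q i j ^ 2) = (d : ℝ) := by
  have h := congrArg Matrix.trace hQ.2
  rw [Matrix.trace_one] at h
  rw [Matrix.trace] at h
  simp only [Matrix.diag, Matrix.mul_apply, Matrix.transpose_apply] at h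
  rw [Finset.sum_comm]
  simpa [sq] using h

end Aux

/-- if `X = η • R` with `η > 0` and `R ∈ O(d)`, and `P'` is a
minimizer of `‖X' - Q‖_F` over `Q ∈ O(d)`, then `‖R - P'‖_F ≤ (2/η) ‖X - X'‖_F`. -/
theorem stmt9 {d : ℕ} (η : ℝ) (hη : 0 < η) (R : Matrix (Fin d) (Fin d) ℝ)
    (hR : IsOrthoMat R) (X X' P' : Matrix (Fin d) (Fin d) ℝ)
    (hX : X = η • R) (hP' : IsOrthoMat P')
    (hmin : ∀ Q, IsOrthoMat Q → frobNorm (X' - P') ≤ frobNorm (X' - Q)) :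
    frobNorm (R - P') ≤ (2 / η) * frobNorm (X - X') := by
  -- notation
  set S : Matrix (Fin d) (Fin d) ℝ → Matrix (Fin d) (Fin d) ℝ → ℝ :=
    fun A B => ∑ i, ∑ j, A i j * B i j with hSdef
  have hinv : (0:ℝ) < η⁻¹ := inv_pos.mpr hη
  -- P' maximizes the inner product with X' over O(d)
  have hS : ∀ Q, IsOrthoMat Q → S X' Q ≤ S X' P' := by
    intro Q hQ
    have h1 := hmin Q hQ
    have h2 : frobNorm (X' - P') ^ 2 ≤ frobNorm (X' - Q) ^ 2 :=
      pow_le_pow_left₀ (frob_nonneg _) h1 2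
    rw [frob_sq, frob_sq, expand_sq, expand_sq, orth_sum_sq Q hQ, orth_sum_sq P' hP'] at h2
    simp only [hSdef]
    linarith
  set Y : Matrix (Fin d) (Fin d) ℝ := η⁻¹ • X' with hY
  -- P' also minimizes distance from Y over O(d); apply with Q = R
  have hSY : ∀ Q : Matrix (Fin d) (Fin d) ℝ, S Y Q = η⁻¹ * S X' Q := by
    intro Q
    simp only [hSdef, hY, Finset.mul_sum, Matrix.smul_apply, smul_eq_mul, mul_assoc]
  have hkey : frobNorm (Y - P') ≤ frobNorm (Y - R) := by
    have h2 : frobNorm (Y - P') ^ 2 ≤ frobNorm (Y - R) ^ 2 := by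
      rw [frob_sq, frob_sq, expand_sq, expand_sq, orth_sum_sq R hR, orth_sum_sq P' hP']
      have e1 : (∑ i, ∑ j, Y i j * P' i j) = η⁻¹ * ∑ i, ∑ j, X' i j * P' i j := by
        simpa [hSdef] using hSY P'
      have e2 : (∑ i, ∑ j, Y i j * R i j) = η⁻¹ * ∑ i, ∑ j, X' i j * R i j := by
        simpa [hSdef] using hSY R
      have h3 : (∑ i, ∑ j, X' i j * R i j) ≤ ∑ i, ∑ j, X' i j * P' i j := by
        simpa [hSdef] using hS R hR
      rw [e1, e2]
      have h4 := mul_le_mul_of_nonneg_left h3 hinv.le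
      linarith
    have h3 : frobNorm (Y - P') ^ 2 ≤ (frobNorm (Y - R)) ^ 2 := h2
    nlinarith [frob_nonneg (Y - P'), frob_nonneg (Y - R)]
  -- R - Y = η⁻¹ • (X - X')
  have hRY : R - Y = η⁻¹ • (X - X') := by
    rw [hY, hX, smul_sub, smul_smul, inv_mul_cancel₀ (ne_of_gt hη), one_smul]
  have hRYn : frobNorm (R - Y) = η⁻¹ * frobNorm (X - X') := by
    rw [hRY, frob_smul _ (le_of_lt hinv)]
  have htri : frobNorm (R - P') ≤ frobNorm (R - Y) + frobNorm (Y - P') :=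
    frob_triangle R P' Y
  have hYR : frobNorm (Y - R) = frobNorm (R - Y) := frob_neg_sub Y R
  have : frobNorm (R - P') ≤ 2 * (η⁻¹ * frobNorm (X - X')) := by
    rw [← hRYn]
    linarith [hkey, htri, hYR]
  calc frobNorm (R - P') ≤ 2 * (η⁻¹ * frobNorm (X - X')) := this
    _ = (2 / η) * frobNorm (X - X') := by rw [div_eq_mul_inv]; ring
end

section
/- Let V* ∈ E, V ∈ F, let ρ > 0, and let Q be a minimizer of ‖V − V*·Q'‖_F over Q' ∈ P_K(O(d)). Set Z = (1/m)·(V*Q)ᵀ·V ∈ ℝ^{Kd×Kd}. If ‖V − V*Q‖_F ≤ √m/ρ, then m·‖Z − I_{Kd}‖_F ≤ (1/2)·√(1 + 1/d)·(√m/ρ)·‖V − V*Q‖_F. -/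
open Matrix BigOperators Finset

section Aux

/-- Sum of squared entries. -/
noncomputable def sumSq {a b : Type*} [Fintype a] [Fintype b]
    (X : Matrix a b ℝ) : ℝ := ∑ i, ∑ j, X i j ^ 2

lemma sumSq_nonneg {a b : Type*} [Fintype a] [Fintype b] (X : Matrix a b ℝ) :
    0 ≤ sumSq X :=
  Finset.sum_nonneg fun _ _ => Finset.sum_nonneg fun _ _ => sq_nonneg _

lemma frobNorm_eq_sqrt {a b : Type*} [Fintype a] [Fintype b] (X : Matrix a b ℝ) :
    frobNorm X = Real.sqrt (sumSq X) := rfl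

lemma frobNorm_nonneg {a b : Type*} [Fintype a] [Fintype b] (X : Matrix a b ℝ) :
    0 ≤ frobNorm X := Real.sqrt_nonneg _

lemma sq_frobNorm {a b : Type*} [Fintype a] [Fintype b] (X : Matrix a b ℝ) :
    frobNorm X ^ 2 = sumSq X := Real.sq_sqrt (sumSq_nonneg X)

lemma sumSq_le_sumSq_of_frob {a b : Type*} [Fintype a] [Fintype b]
    {X Y : Matrix a b ℝ} (h : frobNorm X ≤ frobNorm Y) : sumSq X ≤ sumSq Y := by
  rw [← sq_frobNorm X, ← sq_frobNorm Y]
  exact pow_le_pow_left₀ (frobNorm_nonneg X) h 2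

lemma frob_le_frob_of_sumSq {a b : Type*} [Fintype a] [Fintype b]
    {X Y : Matrix a b ℝ} (h : sumSq X ≤ sumSq Y) : frobNorm X ≤ frobNorm Y :=
  Real.sqrt_le_sqrt h

/-- product of orthogonal matrices is orthogonal -/
lemma IsOrthoMat.mul {d : ℕ} {A B : Matrix (Fin d) (Fin d) ℝ}
    (hA : IsOrthoMat A) (hB : IsOrthoMat B) : IsOrthoMat (A * B) := by
  constructor
  · rw [Matrix.transpose_mul, show A * B * (Bᵀ * Aᵀ) = A * (B * Bᵀ) * Aᵀ by
      noncomm_ring, hB.1, Matrix.mul_one, hA.1]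
  · rw [Matrix.transpose_mul, show Bᵀ * Aᵀ * (A * B) = Bᵀ * (Aᵀ * A) * B by
      noncomm_ring, hA.2, Matrix.mul_one, hB.2]

lemma IsOrthoMat.one {d : ℕ} : IsOrthoMat (1 : Matrix (Fin d) (Fin d) ℝ) := by
  constructor <;> simp

/-- orthogonal matrices preserve the norm of a vector -/
lemma IsOrthoMat.mulVec_self {d : ℕ} {T : Matrix (Fin d) (Fin d) ℝ}
    (hT : IsOrthoMat T) (x : Fin d → ℝ) :
    (T *ᵥ x) ⬝ᵥ (T *ᵥ x) = x ⬝ᵥ x := by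
  rw [Matrix.dotProduct_mulVec, ← Matrix.mulVec_transpose, Matrix.mulVec_mulVec, hT.2,
    Matrix.one_mulVec]

lemma dotProduct_self_nonneg {d : ℕ} (x : Fin d → ℝ) : 0 ≤ x ⬝ᵥ x :=
  Finset.sum_nonneg fun _ _ => mul_self_nonneg _

/-- Cauchy–Schwarz style bound for two orthogonal matrices -/
lemma orth_pair_dot_le {d : ℕ} {A B : Matrix (Fin d) (Fin d) ℝ}
    (hA : IsOrthoMat A) (hB : IsOrthoMat B) (x : Fin d → ℝ) :
    (A *ᵥ x) ⬝ᵥ (B *ᵥ x) ≤ x ⬝ᵥ x := by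
  have h1 := hA.mulVec_self x
  have h2 := hB.mulVec_self x
  have hx := dotProduct_self_nonneg x
  have hcs := sum_mul_sq_le_sq_mul_sq Finset.univ (A *ᵥ x) (B *ᵥ x)
  simp only [dotProduct, pow_two] at h1 h2 hx hcs ⊢
  nlinarith [hcs]

end Aux
section Aux2

variable {d : ℕ}

/-- Householder reflection associated to a vector. -/
noncomputable def reflMat (v : Fin d → ℝ) : Matrix (Fin d) (Fin d) ℝ :=
  1 - (2 / (v ⬝ᵥ v)) • Matrix.vecMulVec v v

lemma reflMat_apply (v : Fin d → ℝ) (i j : Fin d) :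
    reflMat v i j = (if i = j then 1 else 0) - (2 / (v ⬝ᵥ v)) * (v i * v j) := by
  simp [reflMat, Matrix.vecMulVec_apply, Matrix.one_apply, Matrix.sub_apply]

lemma reflMat_transpose (v : Fin d → ℝ) : (reflMat v)ᵀ = reflMat v := by
  ext i j
  simp only [Matrix.transpose_apply, reflMat_apply]
  by_cases h : i = j
  · subst h; ring
  · rw [if_neg h, if_neg fun h' => h h'.symm]; ring

lemma reflMat_mul_self {v : Fin d → ℝ} (hv : v ⬝ᵥ v ≠ 0) :
    reflMat v * reflMat v = 1 := by
  have hs : (v ⬝ᵥ v) = ∑ k, v k * v k := rfl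
  ext i j
  simp only [Matrix.mul_apply, reflMat_apply, Matrix.one_apply]
  have expand : ∀ k, ((if i = k then (1:ℝ) else 0) - 2 / (v ⬝ᵥ v) * (v i * v k)) *
      ((if k = j then (1:ℝ) else 0) - 2 / (v ⬝ᵥ v) * (v k * v j))
      = (if i = k then (if k = j then (1:ℝ) else 0) else 0)
        - (if i = k then (2 / (v ⬝ᵥ v) * (v k * v j)) else 0)
        - (if k = j then (2 / (v ⬝ᵥ v) * (v i * v k)) else 0)
        + ((2 / (v ⬝ᵥ v))^2 * (v i * v j)) * (v k * v k) := by
    intro k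
    by_cases h1 : i = k
    · by_cases h2 : k = j
      · simp [h1, h2, h1.trans h2]; ring
      · simp [h1, h2, show ¬ i = j from fun hh => h2 (h1.symm.trans hh)]; ring
    · by_cases h2 : k = j
      · simp [h1, h2, show ¬ i = j from fun hh => h1 (hh.trans h2.symm)]; ring
      · simp [h1, h2]; ring
  rw [Finset.sum_congr rfl fun k _ => expand k]
  simp only [Finset.sum_add_distrib, Finset.sum_sub_distrib, ← Finset.mul_sum]
  rw [← hs]
  simp only [Finset.sum_ite_eq, Finset.sum_ite_eq', Finset.mem_univ, if_true]
  have hkey : (2 / (v ⬝ᵥ v))^2 * (v i * v j) * (v ⬝ᵥ v) = 2 * (2 / (v ⬝ᵥ v) * (v i * v j)) := by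
    field_simp
  rw [hkey]
  by_cases h : i = j
  · subst h; simp; ring
  · simp only [if_neg h]
    ring

lemma reflMat_isOrtho {v : Fin d → ℝ} (hv : v ⬝ᵥ v ≠ 0) : IsOrthoMat (reflMat v) := by
  refine ⟨?_, ?_⟩ <;> rw [reflMat_transpose] <;> exact reflMat_mul_self hv

lemma trace_reflMat_mul (v : Fin d → ℝ) (N : Matrix (Fin d) (Fin d) ℝ) :
    Matrix.trace (reflMat v * N) = Matrix.trace N - (2 / (v ⬝ᵥ v)) * (v ⬝ᵥ (N *ᵥ v)) := by
  simp only [Matrix.trace, Matrix.diag, Matrix.mul_apply, reflMat_apply]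
  have this1 : ∀ i, ∑ k, ((if i = k then (1:ℝ) else 0) - 2 / (v ⬝ᵥ v) * (v i * v k)) * N k i
      = N i i - (2 / (v ⬝ᵥ v)) * (v i * ∑ k, v k * N k i) := by
    intro i
    have : ∀ k, ((if i = k then (1:ℝ) else 0) - 2 / (v ⬝ᵥ v) * (v i * v k)) * N k i
        = (if i = k then N k i else 0) - (2 / (v ⬝ᵥ v) * v i) * (v k * N k i) := by
      intro k; by_cases h : i = k <;> simp [h] <;> ring
    rw [Finset.sum_congr rfl fun k _ => this k, Finset.sum_sub_distrib,
      Finset.sum_ite_eq, ← Finset.mul_sum]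
    simp [mul_assoc]
  rw [Finset.sum_congr rfl fun i _ => this1 i, Finset.sum_sub_distrib]
  congr 1
  rw [← Finset.mul_sum]
  congr 1
  have : v ⬝ᵥ (N *ᵥ v) = ∑ i, ∑ k, v i * (N i k * v k) := by
    simp [dotProduct, Matrix.mulVec, Finset.mul_sum]
  rw [this, Finset.sum_comm]
  congr 1; ext i
  rw [Finset.mul_sum]
  congr 1; ext k; ring

lemma reflMat_mulVec (v y : Fin d → ℝ) (i : Fin d) :
    (reflMat v *ᵥ y) i = y i - 2 / (v ⬝ᵥ v) * (v ⬝ᵥ y) * v i := by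
  have h0 : (reflMat v *ᵥ y) i = ∑ k, reflMat v i k * y k := rfl
  rw [h0]
  simp only [reflMat_apply]
  have : ∀ k, ((if i = k then (1:ℝ) else 0) - 2 / (v ⬝ᵥ v) * (v i * v k)) * y k
      = (if i = k then y k else 0) - (2 / (v ⬝ᵥ v) * v i) * (v k * y k) := by
    intro k; by_cases h : i = k <;> simp [h] <;> ring
  rw [Finset.sum_congr rfl fun k _ => this k, Finset.sum_sub_distrib,
    Finset.sum_ite_eq, ← Finset.mul_sum]
  simp only [Finset.mem_univ, if_true]
  have hvy : v ⬝ᵥ y = ∑ k, v k * y k := rfl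
  rw [hvy]
  ring

end Aux2
section Aux3

variable {d : ℕ} {N : Matrix (Fin d) (Fin d) ℝ}

lemma dotProduct_self_pos {v : Fin d → ℝ} (hv : v ≠ 0) : 0 < v ⬝ᵥ v := by
  rcases (dotProduct_self_nonneg v).lt_or_eq with h | h
  · exact h
  · exfalso
    apply hv
    ext i
    have h0 : ∑ k, v k * v k = 0 := h.symm
    have := (Finset.sum_eq_zero_iff_of_nonneg
      (fun k (_ : k ∈ Finset.univ) => mul_self_nonneg (v k))).mp h0 i (Finset.mem_univ i)
    exact mul_self_eq_zero.mp this

lemma quad_nonneg_of_trace_cond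
    (hmin : ∀ O, IsOrthoMat O → Matrix.trace (Oᵀ * N) ≤ Matrix.trace N)
    (x : Fin d → ℝ) : 0 ≤ x ⬝ᵥ (N *ᵥ x) := by
  by_cases hx : x = 0
  · simp [hx]
  · have hs := dotProduct_self_pos hx
    have h := hmin (reflMat x) (reflMat_isOrtho (ne_of_gt hs))
    rw [reflMat_transpose, trace_reflMat_mul] at h
    have hc : 0 < 2 / (x ⬝ᵥ x) := by positivity
    nlinarith

lemma dot_reflMat_mulVec (u v y : Fin d → ℝ) :
    v ⬝ᵥ (reflMat u *ᵥ y) = v ⬝ᵥ y - 2 / (u ⬝ᵥ u) * (u ⬝ᵥ y) * (v ⬝ᵥ u) := by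
  have h1 : v ⬝ᵥ (reflMat u *ᵥ y) = ∑ i, v i * (y i - 2 / (u ⬝ᵥ u) * (u ⬝ᵥ y) * u i) := by
    apply Finset.sum_congr rfl
    intro i _
    rw [reflMat_mulVec]
  rw [h1]
  have h2 : ∀ i, v i * (y i - 2 / (u ⬝ᵥ u) * (u ⬝ᵥ y) * u i)
      = v i * y i - (2 / (u ⬝ᵥ u) * (u ⬝ᵥ y)) * (v i * u i) := by intro i; ring
  rw [Finset.sum_congr rfl fun i _ => h2 i, Finset.sum_sub_distrib, ← Finset.mul_sum]
  have hvy : v ⬝ᵥ y = ∑ i, v i * y i := rfl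
  have hvu : v ⬝ᵥ u = ∑ i, v i * u i := rfl
  rw [hvy, hvu]

lemma trace_cond_pair
    (hmin : ∀ O, IsOrthoMat O → Matrix.trace (Oᵀ * N) ≤ Matrix.trace N)
    {u v : Fin d → ℝ} (hu : u ≠ 0) (hv : v ≠ 0) :
    0 ≤ 2 / (u ⬝ᵥ u) * (u ⬝ᵥ (N *ᵥ u))
      + 2 / (v ⬝ᵥ v) * (v ⬝ᵥ (N *ᵥ v) - 2 / (u ⬝ᵥ u) * (u ⬝ᵥ (N *ᵥ v)) * (v ⬝ᵥ u)) := by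
  have hu' := (dotProduct_self_pos hu).ne'
  have hv' := (dotProduct_self_pos hv).ne'
  have h := hmin (reflMat u * reflMat v)
    ((reflMat_isOrtho hu').mul (reflMat_isOrtho hv'))
  rw [Matrix.transpose_mul, reflMat_transpose, reflMat_transpose, Matrix.mul_assoc,
    trace_reflMat_mul, trace_reflMat_mul] at h
  have hmv : (reflMat u * N) *ᵥ v = reflMat u *ᵥ (N *ᵥ v) := by
    rw [← Matrix.mulVec_mulVec]
  rw [hmv, dot_reflMat_mulVec] at h
  linarith

lemma offdiag_symm
    (hmin : ∀ O, IsOrthoMat O → Matrix.trace (Oᵀ * N) ≤ Matrix.trace N)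
    {a b : Fin d} (hab : a ≠ b) : N b a = N a b := by
  have key : ∀ t : ℝ, 0 ≤ N a a + N b b + t * (N b a - N a b) := by
    intro t
    set u : Fin d → ℝ := fun i => if i = a then 1 else 0 with hu_def
    set v : Fin d → ℝ := fun i => if i = a then t else if i = b then 1 else 0 with hv_def
    have hu : u ≠ 0 := by
      intro h
      have := congrFun h a
      simp [hu_def] at this
    have hba : ¬ b = a := fun h => hab h.symm
    have hv : v ≠ 0 := by
      intro h
      have := congrFun h b
      rw [hv_def] at this
      simp only [if_neg hba, if_pos rfl] at this
      exact one_ne_zero this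
    have hNu : ∀ i, (N *ᵥ u) i = N i a := by
      intro i
      simp [Matrix.mulVec, dotProduct, hu_def, mul_ite, mul_one, mul_zero,
        Finset.sum_ite_eq']
    have hNv : ∀ i, (N *ᵥ v) i = t * N i a + N i b := by
      intro i
      have : ∀ j, N i j * v j = t * (if j = a then N i j else 0)
          + (if j = b then N i j else 0) := by
        intro j
        simp only [hv_def]
        by_cases h1 : j = a
        · subst h1
          rw [if_pos rfl, if_pos rfl, if_neg hab]
          ring
        · by_cases h2 : j = b
          · subst h2
            rw [if_neg h1, if_pos rfl, if_neg h1, if_pos rfl]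
            ring
          · rw [if_neg h1, if_neg h2, if_neg h1, if_neg h2]
            ring
      have hsum : (N *ᵥ v) i = ∑ j, N i j * v j := rfl
      rw [hsum, Finset.sum_congr rfl fun j _ => this j, Finset.sum_add_distrib,
        ← Finset.mul_sum]
      simp [Finset.sum_ite_eq']
    have hdotu : ∀ y : Fin d → ℝ, u ⬝ᵥ y = y a := by
      intro y
      simp [dotProduct, hu_def, ite_mul, one_mul, zero_mul, Finset.sum_ite_eq]
    have hdotv : ∀ y : Fin d → ℝ, v ⬝ᵥ y = t * y a + y b := by
      intro y
      have : ∀ j, v j * y j = t * (if j = a then y j else 0)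
          + (if j = b then y j else 0) := by
        intro j
        simp only [hv_def]
        by_cases h1 : j = a
        · subst h1
          rw [if_pos rfl, if_pos rfl, if_neg hab]
          ring
        · by_cases h2 : j = b
          · subst h2
            rw [if_neg h1, if_pos rfl, if_neg h1, if_pos rfl]
            ring
          · rw [if_neg h1, if_neg h2, if_neg h1, if_neg h2]
            ring
      have hsum : v ⬝ᵥ y = ∑ j, v j * y j := rfl
      rw [hsum, Finset.sum_congr rfl fun j _ => this j, Finset.sum_add_distrib,
        ← Finset.mul_sum]
      simp [Finset.sum_ite_eq']
    have h := trace_cond_pair hmin hu hv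
    have hva : v a = t := by rw [hv_def]; simp
    have hvb : v b = 1 := by rw [hv_def]; simp [hba]
    have hua : u a = 1 := by rw [hu_def]; simp
    have hub : u b = 0 := by rw [hu_def]; simp [hba]
    have e1 : u ⬝ᵥ u = 1 := by rw [hdotu, hua]
    have e2 : v ⬝ᵥ v = t^2 + 1 := by
      rw [hdotv, hva, hvb]
      ring
    have e3 : u ⬝ᵥ (N *ᵥ u) = N a a := by rw [hdotu, hNu]
    have e4 : v ⬝ᵥ (N *ᵥ v) = t^2 * N a a + t * N a b + t * N b a + N b b := by
      rw [hdotv, hNv, hNv]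
      ring
    have e5 : u ⬝ᵥ (N *ᵥ v) = t * N a a + N a b := by rw [hdotu, hNv]
    have e6 : v ⬝ᵥ u = t := by
      rw [hdotv, hua, hub]
      ring
    rw [e1, e2, e3, e4, e5, e6] at h
    have ht : (0:ℝ) < t^2 + 1 := by positivity
    have h2 : 0 ≤ (2 * N a a + 2 / (t ^ 2 + 1) *
        (t ^ 2 * N a a + t * N a b + t * N b a + N b b
          - 2 / 1 * (t * N a a + N a b) * t)) * ((t^2+1)/2) := by
      apply mul_nonneg
      · simpa using h
      · positivity
    have hexp : (2 * N a a + 2 / (t ^ 2 + 1) *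
        (t ^ 2 * N a a + t * N a b + t * N b a + N b b
          - 2 / 1 * (t * N a a + N a b) * t)) * ((t^2+1)/2)
        = N a a + N b b + t * (N b a - N a b) := by
      field_simp
      ring
    rw [hexp] at h2
    exact h2
  by_contra hne
  have hB : N b a - N a b ≠ 0 := sub_ne_zero.mpr hne
  have := key (-(N a a + N b b + 1) / (N b a - N a b))
  rw [div_mul_cancel₀ _ hB] at this
  linarith

lemma isHermitian_of_trace_cond
    (hmin : ∀ O, IsOrthoMat O → Matrix.trace (Oᵀ * N) ≤ Matrix.trace N) :
    N.IsHermitian := by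
  ext i j
  simp only [Matrix.conjTranspose_apply, star_trivial]
  by_cases h : j = i
  · rw [h]
  · exact offdiag_symm hmin (fun hh => h hh.symm)

/-- trace of the square of a PSD matrix is at most the square of the trace -/
lemma trace_sq_le_sq_trace {P : Matrix (Fin d) (Fin d) ℝ} (hP : P.PosSemidef) :
    Matrix.trace (P * P) ≤ Matrix.trace P ^ 2 := by
  have hH := hP.1
  have hspec := hH.spectral_theorem
  set U : Matrix (Fin d) (Fin d) ℝ := (hH.eigenvectorUnitary : Matrix (Fin d) (Fin d) ℝ)
    with hU_def
  set D : Matrix (Fin d) (Fin d) ℝ :=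
    Matrix.diagonal (RCLike.ofReal ∘ hH.eigenvalues) with hD_def
  rw [Unitary.conjStarAlgAut_apply, ← hU_def] at hspec
  have hUU : star U * U = 1 := by
    rw [hU_def]
    exact Unitary.coe_star_mul_self hH.eigenvectorUnitary
  have htr1 : Matrix.trace P = ∑ i, hH.eigenvalues i := by
    conv_lhs => rw [hspec]
    rw [Matrix.trace_mul_cycle, hUU, Matrix.one_mul, Matrix.trace_diagonal]
    simp
  have htr2 : Matrix.trace (P * P) = ∑ i, hH.eigenvalues i ^ 2 := by
    conv_lhs => rw [hspec]
    have hassoc : U * D * star U * (U * D * star U) = U * (D * D) * star U := by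
      simp only [Matrix.mul_assoc]
      rw [← Matrix.mul_assoc (star U) U (D * star U), hUU, Matrix.one_mul]
    rw [hassoc, Matrix.trace_mul_cycle, hUU, Matrix.one_mul,
      hD_def, Matrix.diagonal_mul_diagonal, Matrix.trace_diagonal]
    simp [pow_two]
  rw [htr1, htr2]
  have hnn := hP.eigenvalues_nonneg
  have hle : ∀ i, hH.eigenvalues i ≤ ∑ j, hH.eigenvalues j := fun i =>
    Finset.single_le_sum (fun j _ => hnn j) (Finset.mem_univ i)
  calc ∑ i, hH.eigenvalues i ^ 2 ≤ ∑ i, hH.eigenvalues i * (∑ j, hH.eigenvalues j) := by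
        apply Finset.sum_le_sum
        intro i _
        rw [pow_two]
        exact mul_le_mul_of_nonneg_left (hle i) (hnn i)
    _ = (∑ i, hH.eigenvalues i) ^ 2 := by rw [← Finset.sum_mul, pow_two]

end Aux3
section Aux4

variable {K d : ℕ}

/-- the (k,l) block of a `Kd × Kd` matrix -/
def blockSq (X : Matrix (Fin K × Fin d) (Fin K × Fin d) ℝ) (k l : Fin K) :
    Matrix (Fin d) (Fin d) ℝ := fun a b => X (k, a) (l, b)

lemma blockSq_sub (X Y : Matrix (Fin K × Fin d) (Fin K × Fin d) ℝ) (k l : Fin K) :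
    blockSq (X - Y) k l = blockSq X k l - blockSq Y k l := rfl

lemma blockSq_one_diag (k : Fin K) :
    blockSq (1 : Matrix (Fin K × Fin d) (Fin K × Fin d) ℝ) k k = 1 := by
  ext a b
  simp only [blockSq, Matrix.one_apply, Prod.mk.injEq]
  by_cases h : a = b <;> simp [h]

lemma blockSq_one_off {k l : Fin K} (h : k ≠ l) :
    blockSq (1 : Matrix (Fin K × Fin d) (Fin K × Fin d) ℝ) k l = 0 := by
  ext a b
  simp only [blockSq, Matrix.one_apply, Prod.mk.injEq]
  simp [h]

lemma blockSq_smul (c : ℝ) (X : Matrix (Fin K × Fin d) (Fin K × Fin d) ℝ) (k l : Fin K) :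
    blockSq (c • X) k l = c • blockSq X k l := rfl

lemma sumSq_blocks (X : Matrix (Fin K × Fin d) (Fin K × Fin d) ℝ) :
    sumSq X = ∑ k, ∑ l, sumSq (blockSq X k l) := by
  simp only [sumSq, Fintype.sum_prod_type, blockSq]
  exact Finset.sum_congr rfl fun k _ => Finset.sum_comm

lemma trace_blocks (X : Matrix (Fin K × Fin d) (Fin K × Fin d) ℝ) :
    Matrix.trace X = ∑ k, Matrix.trace (blockSq X k k) := by
  simp only [Matrix.trace, Matrix.diag, Fintype.sum_prod_type, blockSq]

lemma IsOrthoMat.transpose {T : Matrix (Fin d) (Fin d) ℝ} (hT : IsOrthoMat T) :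
    IsOrthoMat Tᵀ := by
  refine ⟨?_, ?_⟩ <;> rw [Matrix.transpose_transpose]
  · exact hT.2
  · exact hT.1

lemma sumSq_of_ortho {T : Matrix (Fin d) (Fin d) ℝ} (hT : IsOrthoMat T) :
    sumSq T = d := by
  have h := congrArg Matrix.trace hT.2
  rw [Matrix.trace_one] at h
  have h2 : Matrix.trace (Tᵀ * T) = ∑ b, ∑ a, T a b ^ 2 := by
    simp only [Matrix.trace, Matrix.diag, Matrix.mul_apply, Matrix.transpose_apply, pow_two]
  rw [h2] at h
  rw [sumSq, Finset.sum_comm, h]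
  simp

lemma dot_transpose_mul (A B : Matrix (Fin d) (Fin d) ℝ) (x y : Fin d → ℝ) :
    x ⬝ᵥ ((Aᵀ * B) *ᵥ y) = (A *ᵥ x) ⬝ᵥ (B *ᵥ y) := by
  rw [← Matrix.mulVec_mulVec, Matrix.dotProduct_mulVec, Matrix.vecMul_transpose]

lemma trace_transpose_mul_le {A B : Matrix (Fin d) (Fin d) ℝ}
    (hA : IsOrthoMat A) (hB : IsOrthoMat B) :
    Matrix.trace (Aᵀ * B) ≤ d := by
  have htr : Matrix.trace (Aᵀ * B) = ∑ p : Fin d × Fin d, A p.1 p.2 * B p.1 p.2 := by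
    simp only [Matrix.trace, Matrix.diag, Matrix.mul_apply, Matrix.transpose_apply,
      Fintype.sum_prod_type]
    exact Finset.sum_comm
  have hA2 : ∑ p : Fin d × Fin d, A p.1 p.2 ^ 2 = d := by
    rw [Fintype.sum_prod_type]; exact sumSq_of_ortho hA
  have hB2 : ∑ p : Fin d × Fin d, B p.1 p.2 ^ 2 = d := by
    rw [Fintype.sum_prod_type]; exact sumSq_of_ortho hB
  have hcs := sum_mul_sq_le_sq_mul_sq Finset.univ
    (fun p : Fin d × Fin d => A p.1 p.2) (fun p : Fin d × Fin d => B p.1 p.2)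
  rw [hA2, hB2] at hcs
  rw [htr]
  nlinarith [Nat.cast_nonneg (α := ℝ) d]

lemma sum_sq_le_sq_sum {ι : Type*} (s : Finset ι) (f : ι → ℝ)
    (hf : ∀ i ∈ s, 0 ≤ f i) : ∑ i ∈ s, f i ^ 2 ≤ (∑ i ∈ s, f i) ^ 2 := by
  calc ∑ i ∈ s, f i ^ 2 ≤ ∑ i ∈ s, f i * (∑ j ∈ s, f j) := by
        apply Finset.sum_le_sum
        intro i hi
        rw [pow_two]
        exact mul_le_mul_of_nonneg_left (Finset.single_le_sum hf hi) (hf i hi)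
    _ = (∑ i ∈ s, f i) ^ 2 := by rw [← Finset.sum_mul, pow_two]

lemma sumSq_eq_trace_sq {P : Matrix (Fin d) (Fin d) ℝ} (hsym : Pᵀ = P) :
    sumSq P = Matrix.trace (P * P) := by
  simp only [sumSq, Matrix.trace, Matrix.diag, Matrix.mul_apply]
  apply Finset.sum_congr rfl
  intro i _
  apply Finset.sum_congr rfl
  intro j _
  have : P j i = P i j := by
    conv_lhs => rw [show P j i = Pᵀ i j from rfl, hsym]
  rw [this, pow_two]

lemma sumSq_neg {a b : Type*} [Fintype a] [Fintype b] (X : Matrix a b ℝ) :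
    sumSq (-X) = sumSq X := by
  simp [sumSq]

end Aux4
section Key

lemma clustering_entry_nonneg {n K m : ℕ} {H : Matrix (Fin n) (Fin K) ℝ}
    (hH : IsClusteringMatrix m H) (i : Fin n) (j : Fin K) : 0 ≤ H i j := by
  rcases hH.1 i j with h | h <;> rw [h] <;> norm_num

lemma clustering_entry_le_one {n K m : ℕ} {H : Matrix (Fin n) (Fin K) ℝ}
    (hH : IsClusteringMatrix m H) (i : Fin n) (j : Fin K) : H i j ≤ 1 := by
  rcases hH.1 i j with h | h <;> rw [h] <;> norm_num

lemma sum_mulVec' {ι : Type*} [Fintype ι] {d : ℕ} (A : ι → Matrix (Fin d) (Fin d) ℝ)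
    (x : Fin d → ℝ) : (∑ i, A i) *ᵥ x = ∑ i, (A i *ᵥ x) := by
  ext a
  have h1 : ((∑ i, A i) *ᵥ x) a = ∑ b, (∑ i, A i a b) * x b := by
    simp [Matrix.mulVec, dotProduct, Matrix.sum_apply]
  rw [h1, Finset.sum_apply]
  have h2 : ∀ b, (∑ i, A i a b) * x b = ∑ i, A i a b * x b := fun b => Finset.sum_mul _ _ _
  rw [Finset.sum_congr rfl fun b _ => h2 b, Finset.sum_comm]
  rfl

lemma dot_sum {ι : Type*} [Fintype ι] {d : ℕ} (x : Fin d → ℝ) (y : ι → Fin d → ℝ) :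
    x ⬝ᵥ (∑ i, y i) = ∑ i, x ⬝ᵥ (y i) := by
  have h1 : x ⬝ᵥ (∑ i, y i) = ∑ a, x a * ∑ i, y i a := by
    simp [dotProduct, Finset.sum_apply]
  rw [h1]
  have h2 : ∀ a, x a * ∑ i, y i a = ∑ i, x a * y i a := fun a => Finset.mul_sum _ _ _
  rw [Finset.sum_congr rfl fun a _ => h2 a, Finset.sum_comm]
  rfl

lemma sumSq_sum_smul_le {n d : ℕ} (h : Fin n → ℝ) (G : Fin n → Matrix (Fin d) (Fin d) ℝ)
    (hh : ∀ i, h i ^ 2 = h i) :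
    sumSq (∑ i, h i • G i) ≤ (∑ i, h i) * ∑ i, h i * sumSq (G i) := by
  have hpt : ∀ a b, ((∑ i, h i • G i) a b) ^ 2 ≤ (∑ i, h i) * ∑ i, h i * (G i a b)^2 := by
    intro a b
    have hentry : (∑ i, h i • G i) a b = ∑ i, h i * G i a b := by
      simp [Finset.sum_apply, Matrix.sum_apply]
    have hcs := sum_mul_sq_le_sq_mul_sq Finset.univ h (fun i => h i * G i a b)
    have heq : ∀ i, h i * (h i * G i a b) = h i * G i a b := by
      intro i
      calc h i * (h i * G i a b) = h i ^ 2 * G i a b := by ring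
        _ = h i * G i a b := by rw [hh i]
    rw [Finset.sum_congr rfl fun i _ => heq i] at hcs
    rw [hentry]
    calc (∑ i, h i * G i a b) ^ 2 ≤ (∑ i, h i ^ 2) * ∑ i, (h i * G i a b) ^ 2 := hcs
      _ = (∑ i, h i) * ∑ i, h i * (G i a b)^2 := by
          rw [Finset.sum_congr rfl fun i _ => hh i]
          congr 1
          apply Finset.sum_congr rfl
          intro i _
          rw [mul_pow, hh i]
  calc sumSq (∑ i, h i • G i) ≤ ∑ a, ∑ b, (∑ i, h i) * ∑ i, h i * (G i a b)^2 := by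
        apply Finset.sum_le_sum
        intro a _
        exact Finset.sum_le_sum fun b _ => hpt a b
    _ = (∑ i, h i) * ∑ i, h i * sumSq (G i) := by
        simp only [← Finset.mul_sum]
        congr 1
        have step1 : ∀ a : Fin d, ∑ b, ∑ i, h i * G i a b ^ 2
            = ∑ i, ∑ b, h i * G i a b ^ 2 := fun a => Finset.sum_comm
        rw [Finset.sum_congr rfl fun a _ => step1 a, Finset.sum_comm]
        apply Finset.sum_congr rfl
        intro i _
        rw [sumSq, Finset.mul_sum]
        exact Finset.sum_congr rfl fun a _ => (Finset.mul_sum _ _ _).symm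

theorem key_ineq {n K d m : ℕ} (hm : 0 < m) (hd : 0 < d)
    (HA HB : Matrix (Fin n) (Fin K) ℝ)
    (hHA : IsClusteringMatrix m HA) (hHB : IsClusteringMatrix m HB)
    (TA TB : Fin n → Fin K → Matrix (Fin d) (Fin d) ℝ)
    (hTA : ∀ i k, IsOrthoMat (TA i k)) (hTB : ∀ i k, IsOrthoMat (TB i k))
    (M : Matrix (Fin K × Fin d) (Fin K × Fin d) ℝ)
    (hM : ∀ k l a b, M (k, a) (l, b)
        = ∑ i, HA i k * HB i l * ((TA i k)ᵀ * TB i l) a b)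
    (hmin : ∀ (k : Fin K) (O : Matrix (Fin d) (Fin d) ℝ), IsOrthoMat O →
      Matrix.trace (Oᵀ * blockSq M k k) ≤ Matrix.trace (blockSq M k k)) :
    sumSq (M - (m:ℝ) • 1) ≤ (1 + 1/(d:ℝ)) * (((K:ℝ)*m*d) - Matrix.trace M)^2 := by
  have hdR : (0:ℝ) < d := by exact_mod_cast hd
  -- matrix form of the blocks
  have hblock : ∀ k l, blockSq M k l
      = ∑ i, (HA i k * HB i l) • ((TA i k)ᵀ * TB i l) := by
    intro k l
    ext a b
    rw [show blockSq M k l a b = M (k,a) (l,b) from rfl, hM]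
    simp [Matrix.sum_apply]
  set c : Fin K → Fin K → ℝ := fun k l => ∑ i, HA i k * HB i l with hc_def
  set N : Fin K → Matrix (Fin d) (Fin d) ℝ := fun k => blockSq M k k with hN_def
  set δ : Fin K → ℝ := fun k => (m:ℝ)*d - Matrix.trace (N k) with hδ_def
  have hh01 : ∀ (i : Fin n) (k l : Fin K), (HA i k * HB i l)^2 = HA i k * HB i l := by
    intro i k l
    rcases hHA.1 i k with h1 | h1 <;> rcases hHB.1 i l with h2 | h2 <;>
      rw [h1, h2] <;> norm_num
  have hh_nonneg : ∀ (i : Fin n) (k l : Fin K), 0 ≤ HA i k * HB i l := fun i k l =>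
    mul_nonneg (clustering_entry_nonneg hHA i k) (clustering_entry_nonneg hHB i l)
  have hc_nonneg : ∀ k l, 0 ≤ c k l := fun k l =>
    Finset.sum_nonneg fun i _ => hh_nonneg i k l
  have hc_rowsum : ∀ k, ∑ l, c k l = m := by
    intro k
    rw [hc_def]
    rw [Finset.sum_comm]
    calc ∑ i, ∑ l, HA i k * HB i l = ∑ i : Fin n, HA i k := by
          apply Finset.sum_congr rfl
          intro i _
          rw [← Finset.mul_sum, (hHB.2.1 i), mul_one]
      _ = m := hHA.2.2 k
  have hc_le : ∀ k, c k k ≤ m := by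
    intro k
    calc c k k ≤ ∑ i : Fin n, HA i k := by
          apply Finset.sum_le_sum
          intro i _
          exact mul_le_of_le_one_right (clustering_entry_nonneg hHA i k)
            (clustering_entry_le_one hHB i k)
      _ = m := hHA.2.2 k
  -- trace of diagonal blocks
  have htrN : ∀ k, Matrix.trace (N k) = ∑ i, (HA i k * HB i k)
      * Matrix.trace ((TA i k)ᵀ * TB i k) := by
    intro k
    rw [hN_def]
    simp only
    rw [hblock k k, Matrix.trace_sum]
    apply Finset.sum_congr rfl
    intro i _
    rw [Matrix.trace_smul, smul_eq_mul]
  have htrN_le : ∀ k, Matrix.trace (N k) ≤ c k k * d := by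
    intro k
    rw [htrN k]
    calc ∑ i, (HA i k * HB i k) * Matrix.trace ((TA i k)ᵀ * TB i k)
        ≤ ∑ i, (HA i k * HB i k) * d := by
          apply Finset.sum_le_sum
          intro i _
          exact mul_le_mul_of_nonneg_left (trace_transpose_mul_le (hTA i k) (hTB i k))
            (hh_nonneg i k k)
      _ = c k k * d := by rw [← Finset.sum_mul]
  -- quadratic form upper bound on diagonal blocks
  have hquad : ∀ k (x : Fin d → ℝ), x ⬝ᵥ (N k *ᵥ x) ≤ (m:ℝ) * (x ⬝ᵥ x) := by
    intro k x
    rw [hN_def]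
    simp only
    rw [hblock k k]
    have hmv : (∑ i, (HA i k * HB i k) • ((TA i k)ᵀ * TB i k)) *ᵥ x
        = ∑ i, (HA i k * HB i k) • (((TA i k)ᵀ * TB i k) *ᵥ x) := by
      rw [sum_mulVec']
      apply Finset.sum_congr rfl
      intro i _
      rw [Matrix.smul_mulVec]
    rw [hmv, dot_sum]
    calc ∑ i, x ⬝ᵥ ((HA i k * HB i k) • (((TA i k)ᵀ * TB i k) *ᵥ x))
        = ∑ i, (HA i k * HB i k) * (x ⬝ᵥ (((TA i k)ᵀ * TB i k) *ᵥ x)) := by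
          apply Finset.sum_congr rfl
          intro i _
          rw [dotProduct_smul, smul_eq_mul]
      _ ≤ ∑ i, (HA i k * HB i k) * (x ⬝ᵥ x) := by
          apply Finset.sum_le_sum
          intro i _
          apply mul_le_mul_of_nonneg_left _ (hh_nonneg i k k)
          rw [dot_transpose_mul]
          exact orth_pair_dot_le (hTA i k) (hTB i k) x
      _ = c k k * (x ⬝ᵥ x) := by rw [← Finset.sum_mul]
      _ ≤ (m:ℝ) * (x ⬝ᵥ x) := by
          exact mul_le_mul_of_nonneg_right (hc_le k) (dotProduct_self_nonneg x)
  -- diagonal block bound via PSD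
  have hdiag : ∀ k, sumSq (N k - (m:ℝ) • 1) ≤ (δ k)^2 := by
    intro k
    have hNherm : (N k).IsHermitian := isHermitian_of_trace_cond (hmin k)
    set P : Matrix (Fin d) (Fin d) ℝ := (m:ℝ) • 1 - N k with hP_def
    have hPherm : P.IsHermitian := by
      have h1 : ((m:ℝ) • (1 : Matrix (Fin d) (Fin d) ℝ)).IsHermitian := by
        unfold Matrix.IsHermitian
        ext i j
        simp [Matrix.conjTranspose_apply, Matrix.one_apply, eq_comm]
      exact h1.sub hNherm
    have hPpsd : P.PosSemidef := by
      refine Matrix.PosSemidef.of_dotProduct_mulVec_nonneg hPherm ?_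
      intro x
      have hstar : star x = x := by
        ext i; simp
      rw [hstar]
      have hPx : P *ᵥ x = (m:ℝ) • x - N k *ᵥ x := by
        rw [hP_def, Matrix.sub_mulVec, Matrix.smul_mulVec, Matrix.one_mulVec]
      rw [hPx, dotProduct_sub, dotProduct_smul, smul_eq_mul]
      have := hquad k x
      linarith
    have hPt : Pᵀ = P := by
      ext i j
      calc Pᵀ i j = P j i := rfl
        _ = star (P j i) := (star_trivial _).symm
        _ = Pᴴ i j := rfl
        _ = P i j := by rw [hPherm]
    have htraceP : Matrix.trace P = δ k := by
      rw [hP_def, Matrix.trace_sub, Matrix.trace_smul, Matrix.trace_one, hδ_def]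
      simp [smul_eq_mul]
    have h1 : sumSq P ≤ (δ k)^2 := by
      rw [sumSq_eq_trace_sq hPt, ← htraceP]
      exact trace_sq_le_sq_trace hPpsd
    have h2 : N k - (m:ℝ) • 1 = -P := by rw [hP_def, neg_sub]
    rw [h2, sumSq_neg]
    exact h1
  -- off-diagonal block bound
  have hoff : ∀ k l, sumSq (blockSq M k l) ≤ (c k l)^2 * d := by
    intro k l
    have hb := sumSq_sum_smul_le (fun i => HA i k * HB i l)
      (fun i => (TA i k)ᵀ * TB i l) (fun i => hh01 i k l)
    beta_reduce at hb
    rw [← hblock k l] at hb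
    have hG : ∀ i : Fin n, sumSq ((TA i k)ᵀ * TB i l) = d := fun i =>
      sumSq_of_ortho (((hTA i k).transpose).mul (hTB i l))
    have hsum2 : ∑ i, (HA i k * HB i l) * sumSq ((TA i k)ᵀ * TB i l)
        = (∑ i, HA i k * HB i l) * d := by
      calc ∑ i, (HA i k * HB i l) * sumSq ((TA i k)ᵀ * TB i l)
          = ∑ i, (HA i k * HB i l) * d := Finset.sum_congr rfl fun i _ => by rw [hG i]
        _ = (∑ i, HA i k * HB i l) * d := by rw [← Finset.sum_mul]
    rw [hsum2] at hb
    have hcc : (∑ i, HA i k * HB i l) = c k l := rfl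
    rw [hcc] at hb
    calc sumSq (blockSq M k l) ≤ c k l * (c k l * d) := hb
      _ = (c k l)^2 * d := by ring
  -- δ bounds
  have hδ_lb : ∀ k, ((m:ℝ) - c k k) * d ≤ δ k := by
    intro k
    rw [hδ_def]
    simp only
    have := htrN_le k
    nlinarith
  have hδ_nonneg : ∀ k, 0 ≤ δ k := by
    intro k
    have h1 := hδ_lb k
    have h2 : 0 ≤ ((m:ℝ) - c k k) * d := mul_nonneg (by linarith [hc_le k]) hdR.le
    linarith
  -- off-diagonal row sums
  have hoffrow : ∀ k, ∑ l ∈ Finset.univ.erase k, sumSq (blockSq M k l) ≤ (δ k)^2 / d := by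
    intro k
    have hsum_c : ∑ l ∈ Finset.univ.erase k, c k l = (m:ℝ) - c k k := by
      rw [Finset.sum_erase_eq_sub (Finset.mem_univ k), hc_rowsum k]
    have h1 : ∑ l ∈ Finset.univ.erase k, sumSq (blockSq M k l)
        ≤ ∑ l ∈ Finset.univ.erase k, (c k l)^2 * d :=
      Finset.sum_le_sum fun l _ => hoff k l
    have h2 : ∑ l ∈ Finset.univ.erase k, (c k l)^2 * d
        = (∑ l ∈ Finset.univ.erase k, (c k l)^2) * d := by rw [Finset.sum_mul]
    have h3 : ∑ l ∈ Finset.univ.erase k, (c k l)^2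
        ≤ ((m:ℝ) - c k k)^2 := by
      rw [← hsum_c]
      exact sum_sq_le_sq_sum _ _ fun l _ => hc_nonneg k l
    have h4 : ((m:ℝ) - c k k)^2 * d ≤ (δ k)^2 / d := by
      rw [le_div_iff₀ hdR]
      have h5 := hδ_lb k
      have h6 : 0 ≤ (m:ℝ) - c k k := by linarith [hc_le k]
      have h7 : (((m:ℝ) - c k k) * d) * (((m:ℝ) - c k k) * d) ≤ δ k * δ k :=
        mul_le_mul h5 h5 (mul_nonneg h6 hdR.le) (hδ_nonneg k)
      nlinarith [h7]
    calc ∑ l ∈ Finset.univ.erase k, sumSq (blockSq M k l)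
        ≤ (∑ l ∈ Finset.univ.erase k, (c k l)^2) * d := le_trans h1 (le_of_eq h2)
      _ ≤ ((m:ℝ) - c k k)^2 * d := by
          apply mul_le_mul_of_nonneg_right h3 hdR.le
      _ ≤ (δ k)^2 / d := h4
  -- assemble
  have hsplit : sumSq (M - (m:ℝ) • 1)
      = ∑ k, (sumSq (N k - (m:ℝ) • 1)
          + ∑ l ∈ Finset.univ.erase k, sumSq (blockSq M k l)) := by
    rw [sumSq_blocks]
    apply Finset.sum_congr rfl
    intro k _
    rw [← Finset.add_sum_erase _ _ (Finset.mem_univ k)]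
    congr 1
    · rw [blockSq_sub, blockSq_smul, blockSq_one_diag, hN_def]
    · apply Finset.sum_congr rfl
      intro l hl
      have hlk : l ≠ k := (Finset.mem_erase.mp hl).1
      rw [blockSq_sub, blockSq_smul, blockSq_one_off (fun h => hlk h.symm)]
      simp
  have hδsum : ∑ k, δ k = ((K:ℝ)*m*d) - Matrix.trace M := by
    rw [trace_blocks M, hδ_def]
    rw [Finset.sum_sub_distrib]
    congr 1
    · rw [Finset.sum_const, Finset.card_univ, Fintype.card_fin, nsmul_eq_mul]
      ring
  calc sumSq (M - (m:ℝ) • 1)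
      = ∑ k, (sumSq (N k - (m:ℝ) • 1)
          + ∑ l ∈ Finset.univ.erase k, sumSq (blockSq M k l)) := hsplit
    _ ≤ ∑ k, ((δ k)^2 + (δ k)^2 / d) := by
        apply Finset.sum_le_sum
        intro k _
        exact add_le_add (hdiag k) (hoffrow k)
    _ = (1 + 1/(d:ℝ)) * ∑ k, (δ k)^2 := by
        rw [Finset.mul_sum]
        apply Finset.sum_congr rfl
        intro k _
        field_simp
    _ ≤ (1 + 1/(d:ℝ)) * (∑ k, δ k)^2 := by
        apply mul_le_mul_of_nonneg_left _ (by positivity)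
        exact sum_sq_le_sq_sum _ _ fun k _ => hδ_nonneg k
    _ = (1 + 1/(d:ℝ)) * (((K:ℝ)*m*d) - Matrix.trace M)^2 := by rw [hδsum]

end Key
section Aux6

/-- entrywise inner product of two matrices -/
noncomputable def innerM {a b : Type*} [Fintype a] [Fintype b]
    (X Y : Matrix a b ℝ) : ℝ := ∑ i, ∑ j, X i j * Y i j

lemma innerM_comm {a b : Type*} [Fintype a] [Fintype b] (X Y : Matrix a b ℝ) :
    innerM X Y = innerM Y X := by
  simp only [innerM]
  exact Finset.sum_congr rfl fun i _ => Finset.sum_congr rfl fun j _ => mul_comm _ _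

lemma sumSq_sub' {a b : Type*} [Fintype a] [Fintype b] (X Y : Matrix a b ℝ) :
    sumSq (X - Y) = sumSq X + sumSq Y - 2 * innerM X Y := by
  simp only [sumSq, innerM, Matrix.sub_apply]
  rw [Finset.mul_sum, ← Finset.sum_add_distrib, ← Finset.sum_sub_distrib]
  apply Finset.sum_congr rfl
  intro i _
  rw [Finset.mul_sum, ← Finset.sum_add_distrib, ← Finset.sum_sub_distrib]
  apply Finset.sum_congr rfl
  intro j _
  ring

lemma innerM_eq_trace {n K d : ℕ} (X Y : Matrix (Fin n × Fin d) (Fin K × Fin d) ℝ) :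
    innerM X Y = Matrix.trace (Xᵀ * Y) := by
  simp only [innerM, Matrix.trace, Matrix.diag, Matrix.mul_apply, Matrix.transpose_apply]
  exact Finset.sum_comm

lemma clustering_n {n K m : ℕ} {H : Matrix (Fin n) (Fin K) ℝ}
    (hH : IsClusteringMatrix m H) : (n:ℝ) = (K:ℝ) * m := by
  have h1 : ∑ i : Fin n, ∑ k : Fin K, H i k = n := by
    rw [Finset.sum_congr rfl fun i _ => hH.2.1 i]
    simp
  have h2 : ∑ k : Fin K, ∑ i : Fin n, H i k = (K:ℝ) * m := by
    rw [Finset.sum_congr rfl fun k _ => hH.2.2 k]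
    simp [mul_comm]
  rw [← h1, ← h2]; exact Finset.sum_comm

lemma sumSq_blockform {n K d m : ℕ} (Hc : Matrix (Fin n) (Fin K) ℝ)
    (hHc : IsClusteringMatrix m Hc) (T : Fin n → Fin K → Matrix (Fin d) (Fin d) ℝ)
    (hT : ∀ i k, IsOrthoMat (T i k))
    (X : Matrix (Fin n × Fin d) (Fin K × Fin d) ℝ)
    (hX : ∀ p q, X p q = Hc p.1 q.1 * T p.1 q.1 p.2 q.2) :
    sumSq X = (K:ℝ) * m * d := by
  have hsq : ∀ (i : Fin n) (k : Fin K), Hc i k ^ 2 = Hc i k := by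
    intro i k
    rcases hHc.1 i k with h | h <;> rw [h] <;> norm_num
  have h1 : sumSq X = ∑ i : Fin n, ∑ a : Fin d, ∑ k : Fin K, ∑ b : Fin d,
      (Hc i k * T i k a b)^2 := by
    rw [sumSq]
    rw [Fintype.sum_prod_type]
    apply Finset.sum_congr rfl
    intro i _
    apply Finset.sum_congr rfl
    intro a _
    rw [Fintype.sum_prod_type]
    apply Finset.sum_congr rfl
    intro k _
    apply Finset.sum_congr rfl
    intro b _
    rw [hX (i,a) (k,b)]
  rw [h1]
  have h2 : ∀ i : Fin n, ∑ a : Fin d, ∑ k : Fin K, ∑ b : Fin d, (Hc i k * T i k a b)^2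
      = (d:ℝ) := by
    intro i
    rw [Finset.sum_comm]
    have h3 : ∀ k, ∑ a : Fin d, ∑ b : Fin d, (Hc i k * T i k a b)^2
        = Hc i k * d := by
      intro k
      have : ∀ (a b : Fin d), (Hc i k * T i k a b)^2 = Hc i k * (T i k a b)^2 := by
        intro a b
        rw [mul_pow, hsq i k]
      rw [Finset.sum_congr rfl fun a _ => Finset.sum_congr rfl fun b _ => this a b]
      rw [Finset.sum_congr rfl fun a _ => (Finset.mul_sum _ _ _).symm, ← Finset.mul_sum]
      rw [← sumSq, sumSq_of_ortho (hT i k)]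
    rw [Finset.sum_congr rfl fun k _ => h3 k, ← Finset.sum_mul, hHc.2.1 i, one_mul]
  rw [Finset.sum_congr rfl fun i _ => h2 i, Finset.sum_const, Finset.card_univ,
    Fintype.card_fin, nsmul_eq_mul, clustering_n hHc]
  try ring

lemma mul_PK_entry {n K d : ℕ}
    (Vs : Matrix (Fin n × Fin d) (Fin K × Fin d) ℝ)
    (H' : Matrix (Fin n) (Fin K) ℝ) (S : Fin n → Matrix (Fin d) (Fin d) ℝ)
    (hVs : ∀ p q, Vs p q = H' p.1 q.1 * S p.1 p.2 q.2)
    (U : Fin K → Matrix (Fin d) (Fin d) ℝ) (π : Equiv.Perm (Fin K))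
    (Q : Matrix (Fin K × Fin d) (Fin K × Fin d) ℝ)
    (hQ : ∀ p q, Q p q = if p.1 = π q.1 then U p.1 p.2 q.2 else 0) :
    ∀ p q, (Vs * Q) p q = H' p.1 (π q.1) * (S p.1 * U (π q.1)) p.2 q.2 := by
  rintro ⟨i, a⟩ ⟨k, b⟩
  rw [Matrix.mul_apply, Fintype.sum_prod_type]
  have hterm : ∀ (l : Fin K) (c : Fin d), Vs (i,a) (l,c) * Q (l,c) (k,b)
      = if l = π k then H' i l * (S i a c * U l c b) else 0 := by
    intro l c
    rw [hVs (i,a) (l,c), hQ (l,c) (k,b)]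
    by_cases h : l = π k
    · rw [if_pos h, if_pos h]
      ring
    · rw [if_neg h, if_neg h, mul_zero]
  rw [Finset.sum_congr rfl fun l _ => Finset.sum_congr rfl fun c _ => hterm l c]
  have hpull : ∀ l : Fin K, ∑ c : Fin d, (if l = π k then H' i l * (S i a c * U l c b) else 0)
      = if l = π k then ∑ c : Fin d, H' i l * (S i a c * U l c b) else 0 := by
    intro l
    split_ifs <;> simp
  rw [Finset.sum_congr rfl fun l _ => hpull l, Finset.sum_ite_eq',
    if_pos (Finset.mem_univ (π k)), ← Finset.mul_sum, Matrix.mul_apply]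

lemma blockSq_transpose_mul {n K d : ℕ}
    (HX HV : Matrix (Fin n) (Fin K) ℝ)
    (TX TV : Fin n → Fin K → Matrix (Fin d) (Fin d) ℝ)
    (X V : Matrix (Fin n × Fin d) (Fin K × Fin d) ℝ)
    (hX : ∀ p q, X p q = HX p.1 q.1 * TX p.1 q.1 p.2 q.2)
    (hV : ∀ p q, V p q = HV p.1 q.1 * TV p.1 q.1 p.2 q.2)
    (k l : Fin K) (a b : Fin d) :
    (Xᵀ * V) (k,a) (l,b) = ∑ i, HX i k * HV i l * ((TX i k)ᵀ * TV i l) a b := by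
  rw [Matrix.mul_apply, Fintype.sum_prod_type]
  apply Finset.sum_congr rfl
  intro i _
  have : ∀ c : Fin d, Xᵀ (k,a) (i,c) * V (i,c) (l,b)
      = HX i k * HV i l * (TX i k c a * TV i l c b) := by
    intro c
    rw [Matrix.transpose_apply, hX (i,c) (k,a), hV (i,c) (l,b)]
    ring
  rw [Finset.sum_congr rfl fun c _ => this c, ← Finset.mul_sum, Matrix.mul_apply]
  congr 1

lemma frobNorm_smul_nonneg {a b : Type*} [Fintype a] [Fintype b]
    {c : ℝ} (hc : 0 ≤ c) (X : Matrix a b ℝ) :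
    frobNorm (c • X) = c * frobNorm X := by
  rw [frobNorm_eq_sqrt, frobNorm_eq_sqrt]
  have : sumSq (c • X) = c^2 * sumSq X := by
    simp only [sumSq, Matrix.smul_apply, smul_eq_mul, Finset.mul_sum]
    apply Finset.sum_congr rfl
    intro i _
    apply Finset.sum_congr rfl
    intro j _
    ring
  rw [this, Real.sqrt_mul (sq_nonneg c), Real.sqrt_sq hc]

end Aux6
/-- let `V* ∈ E`, `V ∈ F`, `ρ > 0`, and let `Q` minimize
`‖V - V* Q'‖_F` over `Q' ∈ P_K(O(d))`. Set `Z = (1/m) (V* Q)ᵀ V`. If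
`‖V - V* Q‖_F ≤ √m / ρ` then
`m ‖Z - I‖_F ≤ (1/2) √(1 + 1/d) (√m/ρ) ‖V - V* Q‖_F`. -/
theorem stmt11 {n K d m : ℕ} (hm : 0 < m)
    (G : Matrix (Fin d) (Fin d) ℝ → Prop)
    (hG : G = (IsOrthoMat (d := d)) ∨ G = (IsSpecOrthoMat (d := d)))
    (Vstar V : Matrix (Fin n × Fin d) (Fin K × Fin d) ℝ)
    (hVstar : InFeas m G Vstar) (hV : InF m V)
    (ρ : ℝ) (hρ : 0 < ρ)
    (Q : Matrix (Fin K × Fin d) (Fin K × Fin d) ℝ) (hQ : InPK IsOrthoMat Q)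
    (hQmin : ∀ Q', InPK IsOrthoMat Q' →
      frobNorm (V - Vstar * Q) ≤ frobNorm (V - Vstar * Q'))
    (hsmall : frobNorm (V - Vstar * Q) ≤ Real.sqrt m / ρ) :
    (m : ℝ) * frobNorm ((1 / (m : ℝ)) • ((Vstar * Q)ᵀ * V) - 1)
      ≤ (1/2) * Real.sqrt (1 + 1/(d : ℝ)) * (Real.sqrt m / ρ)
          * frobNorm (V - Vstar * Q) := by
  -- trivial case d = 0
  rcases Nat.eq_zero_or_pos d with hd0 | hd
  · subst hd0
    have hL : frobNorm ((1 / (m : ℝ)) • ((Vstar * Q)ᵀ * V) - 1) = 0 := by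
      rw [frobNorm_eq_sqrt]
      have hz : sumSq ((1 / (m : ℝ)) • ((Vstar * Q)ᵀ * V) - 1) = 0 := by
        rw [sumSq]
        apply Finset.sum_eq_zero
        intro p _
        exact absurd p.2.2 (Nat.not_lt_zero _)
      rw [hz, Real.sqrt_zero]
    rw [hL, mul_zero]
    have h1 : 0 ≤ Real.sqrt (↑m) / ρ := div_nonneg (Real.sqrt_nonneg _) hρ.le
    have h2 : 0 ≤ Real.sqrt (1 + 1/((0:ℕ):ℝ)) := Real.sqrt_nonneg _
    have h3 : 0 ≤ frobNorm (V - Vstar * Q) := frobNorm_nonneg _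
    positivity
  -- main case
  obtain ⟨S, H', hSG, hH', hVs⟩ := hVstar
  have hSorth : ∀ i, IsOrthoMat (S i) := by
    rcases hG with h | h
    · intro i; have := hSG i; rwa [h] at this
    · intro i; have := hSG i; rw [h] at this; exact this.1
  obtain ⟨R, H, hR, hH, hVdef⟩ := hV
  obtain ⟨U, π, hU, hQdef⟩ := hQ
  have hVsE : ∀ p q, Vstar p q = H' p.1 q.1 * S p.1 p.2 q.2 := by
    intro p q; rw [hVs]; rfl
  have hVE : ∀ p q, V p q = H p.1 q.1 * R p.1 p.2 q.2 := by
    intro p q; rw [hVdef]; rfl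
  set HW : Matrix (Fin n) (Fin K) ℝ := fun i k => H' i (π k) with hHW_def
  set TW : Fin n → Fin K → Matrix (Fin d) (Fin d) ℝ := fun i k => S i * U (π k) with hTW_def
  set TV : Fin n → Fin K → Matrix (Fin d) (Fin d) ℝ := fun i _ => R i with hTV_def
  have hHW : IsClusteringMatrix m HW := by
    refine ⟨fun i k => hH'.1 i (π k), fun i => ?_, fun k => hH'.2.2 (π k)⟩
    have := Equiv.sum_comp π (H' i)
    rw [hHW_def]
    simp only
    rw [this]
    exact hH'.2.1 i
  have hTWo : ∀ i k, IsOrthoMat (TW i k) := fun i k => (hSorth i).mul (hU (π k))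
  have hTVo : ∀ i k, IsOrthoMat (TV i k) := fun i _ => hR i
  have hWE : ∀ p q, (Vstar * Q) p q = HW p.1 q.1 * TW p.1 q.1 p.2 q.2 :=
    mul_PK_entry Vstar H' S hVsE U π Q hQdef
  have hME : ∀ k l a b, ((Vstar * Q)ᵀ * V) (k,a) (l,b)
      = ∑ i, HW i k * H i l * ((TW i k)ᵀ * TV i l) a b :=
    blockSq_transpose_mul HW H TW TV _ _ hWE hVE
  have hMBlock : ∀ k l, blockSq ((Vstar * Q)ᵀ * V) k l
      = ∑ i, (HW i k * H i l) • ((TW i k)ᵀ * TV i l) := by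
    intro k l
    ext a b
    rw [show blockSq ((Vstar * Q)ᵀ * V) k l a b = ((Vstar * Q)ᵀ * V) (k,a) (l,b) from rfl,
      hME k l a b]
    simp [Matrix.sum_apply]
  have hsumV : sumSq V = (K:ℝ) * m * d := sumSq_blockform H hH TV hTVo V hVE
  have hsumW : sumSq (Vstar * Q) = (K:ℝ) * m * d :=
    sumSq_blockform HW hHW TW hTWo _ hWE
  -- minimality consequence for diagonal blocks
  have hminkey : ∀ (k0 : Fin K) (O : Matrix (Fin d) (Fin d) ℝ), IsOrthoMat O →
      Matrix.trace (Oᵀ * blockSq ((Vstar * Q)ᵀ * V) k0 k0)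
        ≤ Matrix.trace (blockSq ((Vstar * Q)ᵀ * V) k0 k0) := by
    intro k0 O hO
    set U' : Fin K → Matrix (Fin d) (Fin d) ℝ :=
      fun j => if j = π k0 then U j * O else U j with hU'_def
    have hU' : ∀ j, IsOrthoMat (U' j) := by
      intro j
      rw [hU'_def]
      by_cases h : j = π k0
      · simp only [if_pos h]; exact (hU j).mul hO
      · simp only [if_neg h]; exact hU j
    set Q' : Matrix (Fin K × Fin d) (Fin K × Fin d) ℝ :=
      fun p q => if p.1 = π q.1 then U' p.1 p.2 q.2 else 0 with hQ'_def
    have hQ'E : ∀ p q, Q' p q = if p.1 = π q.1 then U' p.1 p.2 q.2 else 0 := fun p q => rfl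
    have hQ'PK : InPK IsOrthoMat Q' := ⟨U', π, hU', hQ'E⟩
    have hW'E : ∀ p q, (Vstar * Q') p q = H' p.1 (π q.1) * (S p.1 * U' (π q.1)) p.2 q.2 :=
      mul_PK_entry Vstar H' S hVsE U' π Q' hQ'E
    have hTW' : ∀ i k, IsOrthoMat (S i * U' (π k)) := fun i k => (hSorth i).mul (hU' (π k))
    have hsumW' : sumSq (Vstar * Q') = (K:ℝ) * m * d :=
      sumSq_blockform HW hHW (fun i k => S i * U' (π k)) hTW' _ hW'E
    have hfr := hQmin Q' hQ'PK
    have hss := sumSq_le_sumSq_of_frob hfr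
    rw [sumSq_sub', sumSq_sub', hsumW] at hss
    erw [hsumW'] at hss
    have htr_le : Matrix.trace ((Vstar * Q')ᵀ * V) ≤ Matrix.trace ((Vstar * Q)ᵀ * V) := by
      have h1 : innerM V (Vstar * Q) = Matrix.trace ((Vstar * Q)ᵀ * V) := by
        rw [innerM_comm, innerM_eq_trace]
      have h2 : innerM V (Vstar * Q') = Matrix.trace ((Vstar * Q')ᵀ * V) := by
        rw [innerM_comm, innerM_eq_trace]
      rw [h1] at hss; erw [h2] at hss; linarith
    have hM'E : ∀ k l a b, ((Vstar * Q')ᵀ * V) (k,a) (l,b)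
        = ∑ i, HW i k * H i l * (((fun i k => S i * U' (π k)) i k)ᵀ * TV i l) a b :=
      blockSq_transpose_mul HW H (fun i k => S i * U' (π k)) TV _ _ hW'E hVE
    have hM'Block : ∀ k l, blockSq ((Vstar * Q')ᵀ * V) k l
        = ∑ i, (HW i k * H i l) • ((S i * U' (π k))ᵀ * TV i l) := by
      intro k l
      ext a b
      rw [show blockSq ((Vstar * Q')ᵀ * V) k l a b = ((Vstar * Q')ᵀ * V) (k,a) (l,b) from rfl,
        hM'E k l a b]
      simp [Matrix.sum_apply]
    have hdiag_ne : ∀ l, l ≠ k0 →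
        blockSq ((Vstar * Q')ᵀ * V) l l = blockSq ((Vstar * Q)ᵀ * V) l l := by
      intro l hl
      rw [hM'Block, hMBlock]
      have hUeq : U' (π l) = U (π l) := by
        rw [hU'_def]
        simp only
        rw [if_neg (fun h => hl (π.injective h))]
      rw [hUeq]
    have hdiag_k0 : blockSq ((Vstar * Q')ᵀ * V) k0 k0
        = Oᵀ * blockSq ((Vstar * Q)ᵀ * V) k0 k0 := by
      rw [hM'Block, hMBlock, Matrix.mul_sum]
      apply Finset.sum_congr rfl
      intro i _
      rw [mul_smul_comm]
      congr 1
      have hU'k0 : U' (π k0) = U (π k0) * O := by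
        rw [hU'_def]; simp
      rw [hU'k0, hTW_def]
      simp only
      rw [← Matrix.mul_assoc, Matrix.transpose_mul (S i * U (π k0)) O, Matrix.mul_assoc]
    have hsplitA : Matrix.trace ((Vstar * Q')ᵀ * V)
        = Matrix.trace (Oᵀ * blockSq ((Vstar * Q)ᵀ * V) k0 k0)
          + ∑ l ∈ Finset.univ.erase k0, Matrix.trace (blockSq ((Vstar * Q)ᵀ * V) l l) := by
      rw [trace_blocks, ← Finset.add_sum_erase _ _ (Finset.mem_univ k0)]
      congr 1
      · rw [hdiag_k0]
      · exact Finset.sum_congr rfl fun l hl => by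
          rw [hdiag_ne l (Finset.mem_erase.mp hl).1]
    have hsplitB : Matrix.trace ((Vstar * Q)ᵀ * V)
        = Matrix.trace (blockSq ((Vstar * Q)ᵀ * V) k0 k0)
          + ∑ l ∈ Finset.univ.erase k0, Matrix.trace (blockSq ((Vstar * Q)ᵀ * V) l l) := by
      rw [trace_blocks, ← Finset.add_sum_erase _ _ (Finset.mem_univ k0)]
    rw [hsplitA, hsplitB] at htr_le
    linarith
  -- the key inequality
  have hkey := key_ineq hm hd HW H hHW hH TW TV hTWo hTVo ((Vstar * Q)ᵀ * V) hME hminkey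
  -- numerics
  have hε_nonneg : 0 ≤ frobNorm (V - Vstar * Q) := frobNorm_nonneg _
  have hεsq : frobNorm (V - Vstar * Q) ^ 2
      = 2 * (((K:ℝ) * m * d) - Matrix.trace ((Vstar * Q)ᵀ * V)) := by
    rw [sq_frobNorm, sumSq_sub', hsumV, hsumW]
    have h1 : innerM V (Vstar * Q) = Matrix.trace ((Vstar * Q)ᵀ * V) := by
      rw [innerM_comm, innerM_eq_trace]
    rw [h1]
    ring
  set τ : ℝ := ((K:ℝ) * m * d) - Matrix.trace ((Vstar * Q)ᵀ * V) with hτ_def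
  have hτ_nonneg : 0 ≤ τ := by nlinarith [sq_nonneg (frobNorm (V - Vstar * Q))]
  have hmR : (0:ℝ) < m := by exact_mod_cast hm
  have hLHS : (m:ℝ) * frobNorm ((1 / (m : ℝ)) • ((Vstar * Q)ᵀ * V) - 1)
      = frobNorm ((Vstar * Q)ᵀ * V - (m:ℝ) • 1) := by
    have h1 : (1 / (m : ℝ)) • ((Vstar * Q)ᵀ * V) - 1
        = (1/(m:ℝ)) • ((Vstar * Q)ᵀ * V - (m:ℝ) • 1) := by
      rw [smul_sub, smul_smul]
      congr 1
      rw [one_div, inv_mul_cancel₀ hmR.ne', one_smul]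
    rw [h1, frobNorm_smul_nonneg (by positivity), ← mul_assoc, mul_one_div,
      div_self hmR.ne', one_mul]
  have ha : frobNorm ((Vstar * Q)ᵀ * V - (m:ℝ) • 1) ≤ Real.sqrt (1 + 1/(d:ℝ)) * τ := by
    have h2 : frobNorm ((Vstar * Q)ᵀ * V - (m:ℝ) • 1) ^ 2 ≤ (1 + 1/(d:ℝ)) * τ^2 := by
      rw [sq_frobNorm]
      exact hkey
    calc frobNorm ((Vstar * Q)ᵀ * V - (m:ℝ) • 1)
        = Real.sqrt (frobNorm ((Vstar * Q)ᵀ * V - (m:ℝ) • 1) ^ 2) :=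
          (Real.sqrt_sq (frobNorm_nonneg _)).symm
      _ ≤ Real.sqrt ((1 + 1/(d:ℝ)) * τ^2) := Real.sqrt_le_sqrt h2
      _ = Real.sqrt (1 + 1/(d:ℝ)) * τ := by
          rw [Real.sqrt_mul (by positivity), Real.sqrt_sq hτ_nonneg]
  rw [hLHS]
  have hτε : τ = frobNorm (V - Vstar * Q) ^ 2 / 2 := by rw [hεsq]; ring
  have hfinal : Real.sqrt (1 + 1/(d:ℝ)) * τ
      ≤ 1/2 * Real.sqrt (1 + 1/(d:ℝ)) * (Real.sqrt m / ρ) * frobNorm (V - Vstar * Q) := by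
    rw [hτε]
    have hsq2 : frobNorm (V - Vstar * Q) ^ 2
        ≤ (Real.sqrt m / ρ) * frobNorm (V - Vstar * Q) := by
      rw [pow_two]
      exact mul_le_mul_of_nonneg_right hsmall hε_nonneg
    have hs0 : 0 ≤ Real.sqrt (1 + 1/(d:ℝ)) := Real.sqrt_nonneg _
    calc Real.sqrt (1 + 1/(d:ℝ)) * (frobNorm (V - Vstar * Q) ^ 2 / 2)
        ≤ Real.sqrt (1 + 1/(d:ℝ)) * (((Real.sqrt m / ρ) * frobNorm (V - Vstar * Q)) / 2) := by
          apply mul_le_mul_of_nonneg_left _ hs0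
          linarith
      _ = 1/2 * Real.sqrt (1 + 1/(d:ℝ)) * (Real.sqrt m / ρ) * frobNorm (V - Vstar * Q) := by
          ring
  exact le_trans ha hfinal
end

section
/- If Q, Q' ∈ O(d) satisfy det(Q)·det(Q') = −1 (i.e., exactly one of them lies in SO(d)), then ‖Q − Q'‖_F ≥ √2. -/
open Matrix BigOperators Finset

/-- if `Q, Q' ∈ O(d)` and `det Q · det Q' = -1`, then
`‖Q - Q'‖_F ≥ √2`. -/
theorem stmt16 {d : ℕ} (Q Q' : Matrix (Fin d) (Fin d) ℝ)
    (hQ : IsOrthoMat Q) (hQ' : IsOrthoMat Q') (h : Q.det * Q'.det = -1) :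
    Real.sqrt 2 ≤ frobNorm (Q - Q') := by
  set S : Matrix (Fin d) (Fin d) ℝ := Qᵀ * Q' with hS
  have hSSt : S * Sᵀ = 1 := by
    simp only [hS, transpose_mul, transpose_transpose]
    calc Qᵀ * Q' * (Q'ᵀ * Q) = Qᵀ * (Q' * Q'ᵀ) * Q := by noncomm_ring
    _ = 1 := by rw [hQ'.1]; simpa using congrArg id hQ.2
  have hdetS : S.det = -1 := by
    rw [hS, det_mul, det_transpose, h]
  have hdet0 : (1 + S).det = 0 := by
    have h1 : (1 + S) = S * (Sᵀ + 1) := by rw [mul_add, hSSt, mul_one]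
    have h2 : (1 + S).det = S.det * (1 + S).det := by
      conv_lhs => rw [h1]
      rw [det_mul]
      congr 1
      rw [← det_transpose (Sᵀ + 1)]
      congr 1
      simp [transpose_add, add_comm]
    rw [hdetS] at h2
    linarith
  obtain ⟨x, hx0, hx⟩ := (Matrix.exists_mulVec_eq_zero_iff).2 hdet0
  have hSx : S.mulVec x = -x := by
    rw [add_mulVec, one_mulVec] at hx
    exact eq_neg_of_add_eq_zero_right hx
  -- (Q - Q') x = 2 Q x
  have hAx : (Q - Q').mulVec x = (2 : ℝ) • Q.mulVec x := by
    have hQ'e : Q' = Q * S := by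
      rw [hS, ← mul_assoc, hQ.1, one_mul]
    rw [sub_mulVec, hQ'e, ← mulVec_mulVec, hSx, mulVec_neg]
    funext i
    simp
    ring
  -- norms
  have hxx : (0:ℝ) < x ⬝ᵥ x := by
    have hnn : ∀ j ∈ Finset.univ, 0 ≤ x j * x j := fun j _ => mul_self_nonneg _
    obtain ⟨j, hj⟩ := Function.ne_iff.1 hx0
    exact Finset.sum_pos' hnn ⟨j, Finset.mem_univ j, mul_self_pos.2 hj⟩
  have hQxx : (Q.mulVec x) ⬝ᵥ (Q.mulVec x) = x ⬝ᵥ x := by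
    calc (Q.mulVec x) ⬝ᵥ (Q.mulVec x) = (x ᵥ* Qᵀ) ⬝ᵥ (Q.mulVec x) := by
          rw [vecMul_transpose]
    _ = x ⬝ᵥ (Qᵀ.mulVec (Q.mulVec x)) := (dotProduct_mulVec _ _ _).symm
    _ = x ⬝ᵥ ((Qᵀ * Q).mulVec x) := by rw [mulVec_mulVec]
    _ = x ⬝ᵥ x := by rw [hQ.2, one_mulVec]
  set A := Q - Q' with hA
  have hcs : ∀ i, ((A.mulVec x) i)^2 ≤ (∑ j, (A i j)^2) * (x ⬝ᵥ x) := by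
    intro i
    have := Finset.sum_mul_sq_le_sq_mul_sq Finset.univ (A i) x
    simpa [Matrix.mulVec, dotProduct, pow_two] using this
  have hsum : (4:ℝ) * (x ⬝ᵥ x) ≤ (∑ i, ∑ j, (A i j)^2) * (x ⬝ᵥ x) := by
    have h1 : ∑ i, ((A.mulVec x) i)^2 = 4 * (x ⬝ᵥ x) := by
      rw [hAx] at *
      calc ∑ i, (((2:ℝ) • Q.mulVec x) i)^2 = 4 * ∑ i, (Q.mulVec x i)^2 := by
            rw [Finset.mul_sum]; congr 1; funext i; simp [Pi.smul_apply]; ring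
      _ = 4 * (x ⬝ᵥ x) := by
            rw [← hQxx]; congr 1; simp [dotProduct, pow_two]
    calc (4:ℝ) * (x ⬝ᵥ x) = ∑ i, ((A.mulVec x) i)^2 := h1.symm
    _ ≤ ∑ i, (∑ j, (A i j)^2) * (x ⬝ᵥ x) := Finset.sum_le_sum fun i _ => hcs i
    _ = (∑ i, ∑ j, (A i j)^2) * (x ⬝ᵥ x) := by rw [Finset.sum_mul]
  have hF : (2:ℝ) ≤ ∑ i, ∑ j, (A i j)^2 := by
    have h4 : (4:ℝ) ≤ ∑ i, ∑ j, (A i j)^2 := le_of_mul_le_mul_right (by linarith) hxx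
    linarith
  calc Real.sqrt 2 ≤ Real.sqrt (∑ i, ∑ j, (A i j)^2) := Real.sqrt_le_sqrt hF
  _ = frobNorm (Q - Q') := rfl
end
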